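/- arXiv:1907.09232 — 4 statements merged into one kernel-verified Lean document; each statement's English description precedes it below -/
import Mathlib

section
/- Let b : ℝ → ℝ satisfy |b(0)| + Lip(b) ≤ L, let x : [0,T] → ℝ be continuous with |x(s)| ≤ M for all s, let K : ℝ → ℝ≥0 be a bounded kernel with ∫K = 1 whose support is contained in [A,B], and let h > 0. Then for every t ∈ [0,T], |∫_0^t ∫_0^T (1/h)K((s-u)/h) b(x(s)) ds du - ∫_0^t b(x(u)) du| ≤ 2h·(sup_{|z|≤M} |b(z)|)·∫_A^B K(u)|u| du. -/
open Set MeasureTheory intervalIntegral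
open scoped Interval

private lemma qmp_affine (c a : ℝ) (ha : a ≠ 0) :
    Measure.QuasiMeasurePreserving (fun s : ℝ => (s - c) / a) volume volume := by
  have h1 : Measure.QuasiMeasurePreserving (fun s : ℝ => s / a) volume volume := by
    refine ⟨measurable_id.div_const a, ?_⟩
    have hmap : Measure.map (fun s : ℝ => s * a⁻¹) volume
        = ENNReal.ofReal |a⁻¹⁻¹| • volume := Real.map_volume_mul_right (inv_ne_zero ha)
    simp only [div_eq_mul_inv]
    rw [hmap]
    exact Measure.AbsolutelyContinuous.rfl.smul_left _
  have h2 := (measurePreserving_sub_right volume c).quasiMeasurePreserving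
  exact h1.comp h2

private lemma indicator_symmdiff_bound (t c s : ℝ) :
    |(Ioc c (t + c)).indicator (fun _ => (1:ℝ)) s - (Ioc 0 t).indicator (fun _ => (1:ℝ)) s|
      ≤ (Ι (0:ℝ) c).indicator (fun _ => (1:ℝ)) s + (Ι t (t + c)).indicator (fun _ => (1:ℝ)) s := by
  have hnn : ∀ u : Set ℝ, 0 ≤ u.indicator (fun _ => (1:ℝ)) s := fun u =>
    Set.indicator_nonneg (fun _ _ => zero_le_one) s
  have key : ∀ u : Set ℝ, s ∈ u → (1:ℝ) ≤ (Ι (0:ℝ) c).indicator (fun _ => (1:ℝ)) s +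
      (Ι t (t + c)).indicator (fun _ => (1:ℝ)) s → True := fun _ _ _ => trivial
  by_cases h1 : s ∈ Ioc c (t + c) <;> by_cases h2 : s ∈ Ioc 0 t
  · rw [Set.indicator_of_mem h1, Set.indicator_of_mem h2]
    simpa using add_nonneg (hnn _) (hnn _)
  · rw [Set.indicator_of_mem h1, Set.indicator_of_notMem h2]
    have hmem : s ∈ Ι (0:ℝ) c ∨ s ∈ Ι t (t + c) := by
      obtain ⟨hc, htc⟩ := h1
      rw [Set.mem_Ioc, not_and_or] at h2
      rcases h2 with hs | hs
      · push_neg at hs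
        exact Or.inl (Set.mem_uIoc.2 (Or.inr ⟨hc, hs⟩))
      · push_neg at hs
        exact Or.inr (Set.mem_uIoc.2 (Or.inl ⟨hs, htc⟩))
    rcases hmem with hs | hs
    · rw [Set.indicator_of_mem hs, sub_zero, abs_one]
      linarith [hnn (Ι t (t + c))]
    · rw [Set.indicator_of_mem hs, sub_zero, abs_one]
      linarith [hnn (Ι (0:ℝ) c)]
  · rw [Set.indicator_of_notMem h1, Set.indicator_of_mem h2]
    have hmem : s ∈ Ι (0:ℝ) c ∨ s ∈ Ι t (t + c) := by
      obtain ⟨hc, htc⟩ := h2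
      rw [Set.mem_Ioc, not_and_or] at h1
      rcases h1 with hs | hs
      · push_neg at hs
        exact Or.inl (Set.mem_uIoc.2 (Or.inl ⟨hc, hs⟩))
      · push_neg at hs
        exact Or.inr (Set.mem_uIoc.2 (Or.inr ⟨hs, htc⟩))
    rcases hmem with hs | hs
    · rw [Set.indicator_of_mem hs, zero_sub, abs_neg, abs_one]
      linarith [hnn (Ι t (t + c))]
    · rw [Set.indicator_of_mem hs, zero_sub, abs_neg, abs_one]
      linarith [hnn (Ι (0:ℝ) c)]
  · rw [Set.indicator_of_notMem h1, Set.indicator_of_notMem h2]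
    simpa using add_nonneg (hnn _) (hnn _)

private lemma uIoc_indicator_integral_le (T a b : ℝ) :
    (∫ s in Ioc (0:ℝ) T, (Ι a b).indicator (fun _ => (1:ℝ)) s) ≤ |b - a| := by
  have hmeas : MeasurableSet (Ι a b) := measurableSet_uIoc
  have hint : Integrable ((Ι a b).indicator (fun _ => (1:ℝ))) volume := by
    rw [integrable_indicator_iff hmeas]
    exact (integrableOn_const_iff).2 (Or.inr (by rw [Set.uIoc]; exact measure_Ioc_lt_top))
  calc (∫ s in Ioc (0:ℝ) T, (Ι a b).indicator (fun _ => (1:ℝ)) s)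
      ≤ ∫ s, (Ι a b).indicator (fun _ => (1:ℝ)) s := by
        refine setIntegral_le_integral hint (Filter.Eventually.of_forall fun s => ?_)
        exact Set.indicator_nonneg (fun _ _ => zero_le_one) s
    _ = (volume (Ι a b)).toReal := by
        rw [← measureReal_def]; exact integral_indicator_one (μ := volume) hmeas
    _ ≤ |b - a| := by
        rw [Set.uIoc, Real.volume_Ioc]
        rw [ENNReal.toReal_ofReal (sub_nonneg.2 min_le_max), max_sub_min_eq_abs, abs_sub_comm]


private lemma bias_bound_aux (T M A B h : ℝ) (hT : 0 < T) (hh : 0 < h) (hM : 0 ≤ M)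
    (b : ℝ → ℝ) (hbc : Continuous b)
    (S : ℝ) (hS0 : 0 ≤ S)
    (x : ℝ → ℝ) (hx : ContinuousOn x (Set.Icc 0 T))
    (hbS : ∀ s ∈ Set.Icc (0:ℝ) T, |b (x s)| ≤ S)
    (K : ℝ → ℝ) (hKm : Measurable K) (hK0 : ∀ v, 0 ≤ K v) (C : ℝ) (hC : ∀ v, K v ≤ C)
    (hKi : Integrable K volume) (hKint : ∫ v : ℝ, K v = 1)
    (hsupp : Function.support K ⊆ Set.Icc A B) (hAB : A ≤ B)
    (t : ℝ) (ht0 : 0 ≤ t) (htT : t ≤ T) :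
    |(∫ u in (0:ℝ)..t, ∫ s in (0:ℝ)..T, (1 / h) * K ((s - u) / h) * b (x s))
        - ∫ u in (0:ℝ)..t, b (x u)|
      ≤ 2 * h * S * ∫ u in A..B, K u * |u| := by
  have hT0 : (0:ℝ) ≤ T := hT.le
  have hC0 : 0 ≤ C := (hK0 0).trans (hC 0)
  set μT := volume.restrict (Ioc (0:ℝ) T) with hμT
  set μt := volume.restrict (Ioc (0:ℝ) t) with hμt
  haveI hfinT : IsFiniteMeasure μT := ⟨by rw [Measure.restrict_apply_univ]; exact measure_Ioc_lt_top⟩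
  haveI hfint : IsFiniteMeasure μt := ⟨by rw [Measure.restrict_apply_univ]; exact measure_Ioc_lt_top⟩
  -- measurability of b ∘ x on μT
  have hxae : AEMeasurable x μT := by
    have h1 : AEMeasurable x (volume.restrict (Icc (0:ℝ) T)) :=
      (hx.aemeasurable measurableSet_Icc)
    exact h1.mono_measure (Measure.restrict_mono Set.Ioc_subset_Icc_self le_rfl)
  have hbxae : AEStronglyMeasurable (fun s => b (x s)) μT :=
    (hbc.measurable.comp_aemeasurable hxae).aestronglyMeasurable
  have hbS' : ∀ᵐ s ∂μT, |b (x s)| ≤ S :=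
    (ae_restrict_mem measurableSet_Ioc).mono fun s hs =>
      hbS s ⟨hs.1.le, hs.2⟩
  have hbxi : Integrable (fun s => b (x s)) μT := by
    refine Integrable.mono' (integrable_const S) hbxae ?_
    filter_upwards [hbS'] with s hs using by simpa [Real.norm_eq_abs] using hs
  -- the primitive of K and the weight function W
  set W : ℝ → ℝ := fun s => ∫ v in ((s - t) / h)..(s / h), K v with hW
  have hWeq : ∀ s, W s = (∫ v in (0:ℝ)..(s / h), K v) - ∫ v in (0:ℝ)..((s - t) / h), K v :=
    fun s => (intervalIntegral.integral_interval_sub_left hKi.intervalIntegrable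
      hKi.intervalIntegrable).symm
  have hWcont : Continuous W := by
    have hprim : Continuous fun y : ℝ => ∫ v in (0:ℝ)..y, K v :=
      hKi.continuous_primitive 0
    exact ((hprim.comp (continuous_id.div_const h)).sub
      (hprim.comp ((continuous_id.sub continuous_const).div_const h))).congr
      fun s => (hWeq s).symm
  have hdivle : ∀ s : ℝ, (s - t) / h ≤ s / h := fun s => by
    have h1 : s - t ≤ s := by linarith
    exact div_le_div_of_nonneg_right h1 hh.le
  have hW01 : ∀ s, 0 ≤ W s ∧ W s ≤ 1 := by
    intro s
    have hle := hdivle s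
    constructor
    · exact intervalIntegral.integral_nonneg hle fun v _ => hK0 v
    · have heq : W s = ∫ v in Ioc ((s - t)/h) (s/h), K v := intervalIntegral.integral_of_le hle
      rw [heq, ← hKint]
      exact setIntegral_le_integral hKi (Filter.Eventually.of_forall fun v => hK0 v)
  -- inner integral computation
  have hinner : ∀ s : ℝ, (∫ u in (0:ℝ)..t, (1 / h) * K ((s - u) / h) * b (x s))
      = W s * b (x s) := by
    intro s
    have h1 : (∫ u in (0:ℝ)..t, K ((s - u) / h)) = h * W s := by
      have h2 := intervalIntegral.integral_comp_sub_left (a := (0:ℝ)) (b := t)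
        (fun y => K (y / h)) s
      rw [h2]
      have h3 := intervalIntegral.integral_comp_div (a := s - t) (b := s - 0) (c := h)
        (f := K) hh.ne'
      rw [sub_zero] at h3 ⊢
      rw [h3, smul_eq_mul]
    rw [intervalIntegral.integral_mul_const, intervalIntegral.integral_const_mul, h1,
      one_div, inv_mul_cancel_left₀ hh.ne']
  -- Fubini for the double integral
  have hswap : (∫ u in (0:ℝ)..t, ∫ s in (0:ℝ)..T, (1 / h) * K ((s - u) / h) * b (x s))
      = ∫ s in Ioc (0:ℝ) T, W s * b (x s) := by
    rw [intervalIntegral.integral_of_le ht0]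
    have hTs : ∀ u : ℝ, (∫ s in (0:ℝ)..T, (1 / h) * K ((s - u) / h) * b (x s))
        = ∫ s in Ioc (0:ℝ) T, (1 / h) * K ((s - u) / h) * b (x s) :=
      fun u => intervalIntegral.integral_of_le hT0
    simp only [hTs]
    have hfub : Integrable
        (Function.uncurry fun u s => (1 / h) * K ((s - u) / h) * b (x s)) (μt.prod μT) := by
      have hmeas1 : AEStronglyMeasurable
          (Function.uncurry fun u s => (1 / h) * K ((s - u) / h) * b (x s)) (μt.prod μT) := by
        apply AEStronglyMeasurable.mul
        · exact (measurable_const.mul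
            (hKm.comp ((measurable_snd.sub measurable_fst).div_const h))).aestronglyMeasurable
        · exact hbxae.comp_snd
      refine Integrable.mono' (g := fun p : ℝ × ℝ => (1 / h * C) * |b (x p.2)|)
        ?_ hmeas1 (Filter.Eventually.of_forall fun p => ?_)
      · exact Integrable.mul_prod (integrable_const (1 / h * C)) hbxi.abs
      · have hKb : |K ((p.2 - p.1) / h)| ≤ C := by
          rw [abs_of_nonneg (hK0 _)]; exact hC _
        have h1h : (0:ℝ) ≤ 1 / h := by positivity
        calc ‖1 / h * K ((p.2 - p.1) / h) * b (x p.2)‖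
            = 1 / h * |K ((p.2 - p.1) / h)| * |b (x p.2)| := by
              rw [Real.norm_eq_abs, abs_mul, abs_mul, abs_of_nonneg h1h]
          _ ≤ 1 / h * C * |b (x p.2)| := by gcongr
    rw [MeasureTheory.integral_integral_swap hfub]
    refine MeasureTheory.integral_congr_ae (Filter.Eventually.of_forall fun s => ?_)
    show (∫ u, (1 / h) * K ((s - u) / h) * b (x s) ∂μt) = W s * b (x s)
    rw [hμt, ← intervalIntegral.integral_of_le ht0]
    exact hinner s
  -- the indicator weight
  set χ : ℝ → ℝ := (Ioc (0:ℝ) t).indicator (fun _ => (1:ℝ)) with hχ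
  have hχm : Measurable χ := measurable_const.indicator measurableSet_Ioc
  have hχ01 : ∀ s, 0 ≤ χ s ∧ χ s ≤ 1 := by
    intro s
    by_cases hs : s ∈ Ioc (0:ℝ) t <;> simp [hχ, Set.indicator_of_mem, Set.indicator_of_notMem, hs]
  have hsecond : (∫ u in (0:ℝ)..t, b (x u))
      = ∫ s in Ioc (0:ℝ) T, χ s * b (x s) := by
    have hpt : ∀ s, χ s * b (x s) = (Ioc (0:ℝ) t).indicator (fun s => b (x s)) s := by
      intro s
      by_cases hs : s ∈ Ioc (0:ℝ) t <;>
        simp [hχ, Set.indicator_of_mem, Set.indicator_of_notMem, hs]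
    simp only [hpt]
    rw [MeasureTheory.integral_indicator measurableSet_Ioc]
    rw [Measure.restrict_restrict measurableSet_Ioc,
      Set.inter_eq_left.2 (Set.Ioc_subset_Ioc le_rfl htT)]
    exact intervalIntegral.integral_of_le ht0
  -- integrability of the pieces
  have hWbi : Integrable (fun s => W s * b (x s)) μT := by
    refine hbxi.bdd_mul (c := 1) hWcont.aestronglyMeasurable (Filter.Eventually.of_forall fun s => ?_)
    rw [Real.norm_eq_abs, abs_of_nonneg (hW01 s).1]
    exact (hW01 s).2
  have hχbi : Integrable (fun s => χ s * b (x s)) μT := by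
    refine hbxi.bdd_mul (c := 1) hχm.aestronglyMeasurable (Filter.Eventually.of_forall fun s => ?_)
    rw [Real.norm_eq_abs, abs_of_nonneg (hχ01 s).1]
    exact (hχ01 s).2
  have hDi : Integrable (fun s => (W s - χ s) * b (x s)) μT := by
    have := hWbi.sub hχbi
    simpa [sub_mul, Pi.sub_def] using this
  have hWχm : Measurable fun s => |W s - χ s| := (hWcont.measurable.sub hχm).abs
  have hWχi : Integrable (fun s => |W s - χ s|) μT := by
    refine Integrable.mono' (integrable_const (2:ℝ)) hWχm.aestronglyMeasurable
      (Filter.Eventually.of_forall fun s => ?_)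
    rw [Real.norm_eq_abs, abs_abs]
    have h1 := hW01 s; have h2 := hχ01 s
    rw [abs_sub_le_iff]; constructor <;> linarith
  have hWχSi : Integrable (fun s => |W s - χ s| * S) μT := hWχi.mul_const S
  -- reduce to the weight difference
  have key : |(∫ s in Ioc (0:ℝ) T, (W s - χ s) * b (x s))|
      ≤ S * ∫ s in Ioc (0:ℝ) T, |W s - χ s| := by
    calc |(∫ s in Ioc (0:ℝ) T, (W s - χ s) * b (x s))|
        ≤ ∫ s in Ioc (0:ℝ) T, ‖(W s - χ s) * b (x s)‖ := by
          rw [← Real.norm_eq_abs]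
          exact MeasureTheory.norm_integral_le_integral_norm _
      _ ≤ ∫ s in Ioc (0:ℝ) T, |W s - χ s| * S := by
          refine integral_mono_of_nonneg (Filter.Eventually.of_forall fun s => norm_nonneg _)
            hWχSi ?_
          filter_upwards [hbS'] with s hs
          rw [Real.norm_eq_abs, abs_mul]
          exact mul_le_mul_of_nonneg_left hs (abs_nonneg _)
      _ = S * ∫ s in Ioc (0:ℝ) T, |W s - χ s| := by
          rw [MeasureTheory.integral_mul_const, mul_comm]
  -- representation of W as an integral against K with moving indicator
  set ind : ℝ → ℝ → ℝ := fun v s => (Ioc (h * v) (t + h * v)).indicator (fun _ => (1:ℝ)) s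
    with hind
  have hmemeq : ∀ v s : ℝ, v ∈ Ico ((s - t) / h) (s / h) ↔ s ∈ Ioc (h * v) (t + h * v) := by
    intro v s
    rw [Set.mem_Ico, Set.mem_Ioc, div_le_iff₀ hh, lt_div_iff₀ hh]
    constructor <;> rintro ⟨u1, u2⟩ <;> constructor <;> linarith [mul_comm v h]
  have hind01 : ∀ v s, 0 ≤ ind v s ∧ ind v s ≤ 1 := by
    intro v s
    by_cases hs : s ∈ Ioc (h * v) (t + h * v) <;> simp [hind, hs]
  have hWrep : ∀ s, W s = ∫ v, K v * ind v s := by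
    intro s
    have e1 : W s = ∫ v in Ico ((s - t) / h) (s / h), K v := by
      calc W s = ∫ v in Ioc ((s - t) / h) (s / h), K v :=
            intervalIntegral.integral_of_le (hdivle s)
        _ = ∫ v in Ioo ((s - t) / h) (s / h), K v := integral_Ioc_eq_integral_Ioo
        _ = ∫ v in Ico ((s - t) / h) (s / h), K v := integral_Ico_eq_integral_Ioo.symm
    rw [e1, ← MeasureTheory.integral_indicator measurableSet_Ico]
    refine MeasureTheory.integral_congr_ae (Filter.Eventually.of_forall fun v => ?_)
    by_cases hv : v ∈ Ico ((s - t) / h) (s / h)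
    · rw [Set.indicator_of_mem hv]
      show K v = K v * (Ioc (h * v) (t + h * v)).indicator (fun _ => (1:ℝ)) s
      rw [Set.indicator_of_mem ((hmemeq v s).1 hv), mul_one]
    · rw [Set.indicator_of_notMem hv]
      show (0:ℝ) = K v * (Ioc (h * v) (t + h * v)).indicator (fun _ => (1:ℝ)) s
      rw [Set.indicator_of_notMem (fun hs => hv ((hmemeq v s).2 hs)), mul_zero]
  -- measurability of the moving indicator on the product space
  have hindm2 : Measurable fun p : ℝ × ℝ => ind p.2 p.1 := by
    have e : (fun p : ℝ × ℝ => ind p.2 p.1)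
        = fun p => if h * p.2 < p.1 ∧ p.1 ≤ t + h * p.2 then (1:ℝ) else 0 := by
      funext p; simp [hind, Set.indicator_apply, Set.mem_Ioc]
    rw [e]
    refine Measurable.ite ?_ measurable_const measurable_const
    rw [Set.setOf_and]
    exact (measurableSet_lt (measurable_const.mul measurable_snd) measurable_fst).inter
      (measurableSet_le measurable_fst (measurable_const.add (measurable_const.mul measurable_snd)))
  have hindm1 : ∀ s : ℝ, Measurable fun v => ind v s := by
    intro s
    exact hindm2.comp (measurable_const.prodMk measurable_id)
  have habs1 : ∀ v s, |ind v s - χ s| ≤ 1 := by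
    intro v s
    have h1 := hind01 v s; have h2 := hχ01 s
    rw [abs_sub_le_iff]; constructor <;> linarith
  -- pointwise bound for |W - χ|
  have hptw : ∀ s, |W s - χ s| ≤ ∫ v, K v * |ind v s - χ s| := by
    intro s
    have hKind_i : Integrable (fun v => K v * ind v s) volume := by
      refine Integrable.mono' hKi ((hKm.mul (hindm1 s)).aestronglyMeasurable)
        (Filter.Eventually.of_forall fun v => ?_)
      rw [Real.norm_eq_abs, abs_mul, abs_of_nonneg (hK0 v), abs_of_nonneg (hind01 v s).1]
      calc K v * ind v s ≤ K v * 1 := mul_le_mul_of_nonneg_left (hind01 v s).2 (hK0 v)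
        _ = K v := mul_one _
    have hKχ_i : Integrable (fun v => K v * χ s) volume := hKi.mul_const _
    have hχrep : χ s = ∫ v, K v * χ s := by
      rw [MeasureTheory.integral_mul_const, hKint, one_mul]
    have e2 : W s - χ s = ∫ v, (K v * ind v s - K v * χ s) := by
      rw [integral_sub hKind_i hKχ_i, ← hWrep s, ← hχrep]
    calc |W s - χ s| = |∫ v, (K v * ind v s - K v * χ s)| := by rw [e2]
      _ ≤ ∫ v, ‖K v * ind v s - K v * χ s‖ := by
          rw [← Real.norm_eq_abs]
          exact MeasureTheory.norm_integral_le_integral_norm _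
      _ = ∫ v, K v * |ind v s - χ s| := by
          refine MeasureTheory.integral_congr_ae (Filter.Eventually.of_forall fun v => ?_)
          show ‖K v * ind v s - K v * χ s‖ = K v * |ind v s - χ s|
          rw [Real.norm_eq_abs, ← mul_sub, abs_mul, abs_of_nonneg (hK0 v)]
  -- integrability on the product space
  have hprodi : Integrable (fun p : ℝ × ℝ => K p.2 * |ind p.2 p.1 - χ p.1|)
      (μT.prod volume) := by
    have hprodm : AEStronglyMeasurable (fun p : ℝ × ℝ => K p.2 * |ind p.2 p.1 - χ p.1|)
        (μT.prod volume) :=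
      ((hKm.comp measurable_snd).mul
        ((hindm2.sub (hχm.comp measurable_fst)).abs)).aestronglyMeasurable
    refine Integrable.mono' (g := fun p : ℝ × ℝ => (1:ℝ) * K p.2)
      (Integrable.mul_prod (integrable_const 1) hKi) hprodm
      (Filter.Eventually.of_forall fun p => ?_)
    show ‖K p.2 * |ind p.2 p.1 - χ p.1|‖ ≤ 1 * K p.2
    rw [one_mul, Real.norm_eq_abs, abs_mul, abs_of_nonneg (hK0 _), abs_abs]
    calc K p.2 * |ind p.2 p.1 - χ p.1| ≤ K p.2 * 1 :=
          mul_le_mul_of_nonneg_left (habs1 p.2 p.1) (hK0 _)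
      _ = K p.2 := mul_one _
  -- the per-v bound on the symmetric difference
  have hper : ∀ v : ℝ, (∫ s in Ioc (0:ℝ) T, |ind v s - χ s|) ≤ 2 * (h * |v|) := by
    intro v
    have hIint : ∀ a c : ℝ, Integrable ((Ι a c).indicator (fun _ => (1:ℝ))) μT := by
      intro a c
      refine Integrable.mono' (integrable_const 1)
        (measurable_const.indicator measurableSet_uIoc).aestronglyMeasurable
        (Filter.Eventually.of_forall fun s => ?_)
      by_cases hs : s ∈ Ι a c <;> simp [hs]
    have hI1 := hIint 0 (h * v)
    have hI2 := hIint t (t + h * v)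
    calc (∫ s in Ioc (0:ℝ) T, |ind v s - χ s|)
        ≤ ∫ s in Ioc (0:ℝ) T, ((Ι (0:ℝ) (h * v)).indicator (fun _ => (1:ℝ)) s
            + (Ι t (t + h * v)).indicator (fun _ => (1:ℝ)) s) := by
          refine integral_mono_of_nonneg (Filter.Eventually.of_forall fun s => abs_nonneg _)
            (hI1.add hI2) (Filter.Eventually.of_forall fun s => ?_)
          simpa [hind, hχ] using indicator_symmdiff_bound t (h * v) s
      _ = (∫ s in Ioc (0:ℝ) T, (Ι (0:ℝ) (h * v)).indicator (fun _ => (1:ℝ)) s)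
            + ∫ s in Ioc (0:ℝ) T, (Ι t (t + h * v)).indicator (fun _ => (1:ℝ)) s :=
          integral_add hI1 hI2
      _ ≤ |h * v - 0| + |t + h * v - t| :=
          add_le_add (uIoc_indicator_integral_le T 0 (h * v))
            (uIoc_indicator_integral_le T t (t + h * v))
      _ = 2 * (h * |v|) := by
          rw [sub_zero, add_sub_cancel_left, abs_mul, abs_of_pos hh]; ring
  -- integrability of K v * |v|
  have hKvi : Integrable (fun v => K v * |v|) volume := by
    refine Integrable.mono' (hKi.const_mul (max |A| |B|))
      ((hKm.mul measurable_id.abs).aestronglyMeasurable)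
      (Filter.Eventually.of_forall fun v => ?_)
    by_cases hv : K v = 0
    · simp [hv, mul_nonneg (le_max_iff.2 (Or.inl (abs_nonneg A))) (hK0 v)]
    · have hvm : v ∈ Icc A B := hsupp hv
      have hvb : |v| ≤ max |A| |B| := by
        rw [abs_le]
        constructor
        · calc -(max |A| |B|) ≤ -|A| := neg_le_neg (le_max_left _ _)
            _ ≤ A := neg_abs_le A
            _ ≤ v := hvm.1
        · calc v ≤ B := hvm.2
            _ ≤ |B| := le_abs_self B
            _ ≤ max |A| |B| := le_max_right _ _
      rw [Real.norm_eq_abs, abs_mul, abs_of_nonneg (hK0 v), abs_abs]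
      calc K v * |v| ≤ K v * max |A| |B| := mul_le_mul_of_nonneg_left hvb (hK0 v)
        _ = max |A| |B| * K v := mul_comm _ _
  -- the main estimate
  have hmain : (∫ s in Ioc (0:ℝ) T, |W s - χ s|) ≤ 2 * h * ∫ v, K v * |v| := by
    have hK2h : Integrable (fun v => K v * (2 * (h * |v|))) volume := by
      have e : (fun v => K v * (2 * (h * |v|))) = fun v => (2 * h) * (K v * |v|) := by
        funext v; ring
      rw [e]; exact hKvi.const_mul (2 * h)
    calc (∫ s in Ioc (0:ℝ) T, |W s - χ s|)
        ≤ ∫ s in Ioc (0:ℝ) T, ∫ v, K v * |ind v s - χ s| := by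
          refine integral_mono_of_nonneg (Filter.Eventually.of_forall fun s => abs_nonneg _)
            hprodi.integral_prod_left (Filter.Eventually.of_forall hptw)
      _ = ∫ v, ∫ s in Ioc (0:ℝ) T, K v * |ind v s - χ s| :=
          MeasureTheory.integral_integral_swap hprodi
      _ = ∫ v, K v * ∫ s in Ioc (0:ℝ) T, |ind v s - χ s| := by
          refine MeasureTheory.integral_congr_ae (Filter.Eventually.of_forall fun v => ?_)
          exact MeasureTheory.integral_const_mul _ _
      _ ≤ ∫ v, K v * (2 * (h * |v|)) := by
          refine integral_mono_of_nonneg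
            (Filter.Eventually.of_forall fun v =>
              mul_nonneg (hK0 v) (integral_nonneg fun s => abs_nonneg _))
            hK2h
            (Filter.Eventually.of_forall fun v =>
              mul_le_mul_of_nonneg_left (hper v) (hK0 v))
      _ = 2 * h * ∫ v, K v * |v| := by
          have e : (fun v => K v * (2 * (h * |v|))) = fun v => (2 * h) * (K v * |v|) := by
            funext v; ring
          rw [e, MeasureTheory.integral_const_mul]
  -- identify the kernel moment integral
  have hKAB : (∫ v, K v * |v|) = ∫ u in A..B, K u * |u| := by
    rw [intervalIntegral.integral_of_le hAB, ← integral_Icc_eq_integral_Ioc]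
    refine (setIntegral_eq_integral_of_forall_compl_eq_zero fun v hv => ?_).symm
    have hKv : K v = 0 := by
      by_contra hKv; exact hv (hsupp hKv)
    simp [hKv]
  -- conclusion
  rw [hswap, hsecond, ← integral_sub hWbi hχbi]
  have e3 : (∫ s in Ioc (0:ℝ) T, (W s * b (x s) - χ s * b (x s)))
      = ∫ s in Ioc (0:ℝ) T, (W s - χ s) * b (x s) := by
    refine MeasureTheory.integral_congr_ae (Filter.Eventually.of_forall fun s => ?_)
    show W s * b (x s) - χ s * b (x s) = (W s - χ s) * b (x s)
    ring
  rw [e3]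
  calc |(∫ s in Ioc (0:ℝ) T, (W s - χ s) * b (x s))|
      ≤ S * ∫ s in Ioc (0:ℝ) T, |W s - χ s| := key
    _ ≤ S * (2 * h * ∫ v, K v * |v|) := mul_le_mul_of_nonneg_left hmain hS0
    _ = 2 * h * S * ∫ u in A..B, K u * |u| := by rw [hKAB]; ring

/-- Bias bound for the term `β_ε(t)` in Theorem 3.4:
`|∫_0^t ∫_0^T K_h(s-u) b(x(s)) ds du - ∫_0^t b(x(u)) du|
  ≤ 2h (sup_{|z|≤M} |b(z)|) ∫_A^B K(u)|u| du`. -/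
theorem bias_bound (T L M A B h : ℝ) (hT : 0 < T) (hh : 0 < h) (hM : 0 ≤ M)
    (b : ℝ → ℝ)
    (hb : ∃ ℓ : ℝ, 0 ≤ ℓ ∧ (∀ z w : ℝ, |b z - b w| ≤ ℓ * |z - w|) ∧ |b 0| + ℓ ≤ L)
    (x : ℝ → ℝ) (hx : ContinuousOn x (Set.Icc 0 T))
    (hxM : ∀ s ∈ Set.Icc (0:ℝ) T, |x s| ≤ M)
    (K : ℝ → ℝ) (hK0 : ∀ v, 0 ≤ K v) (hKbdd : ∃ C, ∀ v, K v ≤ C)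
    (hKint : ∫ v : ℝ, K v = 1) (hsupp : Function.support K ⊆ Set.Icc A B) :
    ∀ t ∈ Set.Icc (0:ℝ) T,
      |(∫ u in (0:ℝ)..t, ∫ s in (0:ℝ)..T, (1 / h) * K ((s - u) / h) * b (x s))
          - ∫ u in (0:ℝ)..t, b (x u)|
        ≤ 2 * h * (⨆ z : Set.Icc (-M) M, |b z.1|) * ∫ u in A..B, K u * |u| := by
  intro t ht
  obtain ⟨ℓ, hℓ0, hℓ, hL⟩ := hb
  obtain ⟨C, hC⟩ := hKbdd
  have hC0 : 0 ≤ C := (hK0 0).trans (hC 0)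
  have hbc : Continuous b := by
    have hlip : LipschitzWith (Real.toNNReal ℓ) b := by
      refine LipschitzWith.of_dist_le_mul fun z w => ?_
      rw [Real.dist_eq, Real.dist_eq, Real.coe_toNNReal ℓ hℓ0]
      exact hℓ z w
    exact hlip.continuous
  have hAB : A ≤ B := by
    by_contra hAB'
    push_neg at hAB'
    have hzero : ∀ v, K v = 0 := fun v => by
      by_contra hv
      have hm := hsupp hv
      rw [Set.Icc_eq_empty_iff.2 (by exact fun hc => absurd hc (not_le.2 hAB'))] at hm
      exact hm
    simp only [hzero, MeasureTheory.integral_zero] at hKint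
    norm_num at hKint
  have hKi : Integrable K volume := by
    by_contra hni
    rw [MeasureTheory.integral_undef hni] at hKint
    norm_num at hKint
  -- the sup bound
  have hbdd : BddAbove (Set.range fun z : Set.Icc (-M) M => |b z.1|) := by
    refine ⟨|b 0| + ℓ * M, ?_⟩
    rintro r ⟨z, rfl⟩
    have h1 : |b z.1| ≤ |b z.1 - b 0| + |b 0| := by
      calc |b z.1| = |(b z.1 - b 0) + b 0| := by ring_nf
        _ ≤ |b z.1 - b 0| + |b 0| := abs_add_le _ _
    have h2 : |b z.1 - b 0| ≤ ℓ * |z.1| := by simpa using hℓ z.1 0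
    have h3 : |z.1| ≤ M := abs_le.2 ⟨z.2.1, z.2.2⟩
    have h4 : ℓ * |z.1| ≤ ℓ * M := mul_le_mul_of_nonneg_left h3 hℓ0
    linarith
  have h0mem : (0:ℝ) ∈ Set.Icc (-M) M := ⟨neg_nonpos.2 hM, hM⟩
  have hS0 : 0 ≤ ⨆ z : Set.Icc (-M) M, |b z.1| :=
    le_trans (abs_nonneg (b 0)) (le_ciSup hbdd (⟨0, h0mem⟩ : Set.Icc (-M) M))
  have hbS : ∀ s ∈ Set.Icc (0:ℝ) T, |b (x s)| ≤ ⨆ z : Set.Icc (-M) M, |b z.1| := by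
    intro s hs
    have hxs : x s ∈ Set.Icc (-M) M := by
      have := abs_le.1 (hxM s hs); exact ⟨this.1, this.2⟩
    exact le_ciSup hbdd (⟨x s, hxs⟩ : Set.Icc (-M) M)
  -- measurable modification of K
  obtain ⟨K₁, hK₁sm, hK₁e⟩ := hKi.aestronglyMeasurable
  set K₂ : ℝ → ℝ := fun v => (Set.Icc A B).indicator (fun w => min C (max (K₁ w) 0)) v with hK₂
  have hK₂m : Measurable K₂ :=
    (measurable_const.min (hK₁sm.measurable.max measurable_const)).indicator measurableSet_Icc
  have hK₂e : K₂ =ᵐ[volume] K := by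
    filter_upwards [hK₁e] with v hv
    by_cases hvm : v ∈ Set.Icc A B
    · show (Set.Icc A B).indicator (fun w => min C (max (K₁ w) 0)) v = K v
      rw [Set.indicator_of_mem hvm, ← hv, max_eq_left (hK0 v), min_eq_right (hC v)]
    · show (Set.Icc A B).indicator (fun w => min C (max (K₁ w) 0)) v = K v
      rw [Set.indicator_of_notMem hvm]
      by_contra hne
      exact hvm (hsupp fun h0 => hne h0.symm)
  have hK₂0 : ∀ v, 0 ≤ K₂ v := fun v => by
    by_cases hvm : v ∈ Set.Icc A B
    · show 0 ≤ (Set.Icc A B).indicator (fun w => min C (max (K₁ w) 0)) v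
      rw [Set.indicator_of_mem hvm]
      exact le_min hC0 (le_max_right _ _)
    · show 0 ≤ (Set.Icc A B).indicator (fun w => min C (max (K₁ w) 0)) v
      rw [Set.indicator_of_notMem hvm]
  have hK₂C : ∀ v, K₂ v ≤ C := fun v => by
    by_cases hvm : v ∈ Set.Icc A B
    · show (Set.Icc A B).indicator (fun w => min C (max (K₁ w) 0)) v ≤ C
      rw [Set.indicator_of_mem hvm]; exact min_le_left _ _
    · show (Set.Icc A B).indicator (fun w => min C (max (K₁ w) 0)) v ≤ C
      rw [Set.indicator_of_notMem hvm]; exact hC0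
  have hK₂supp : Function.support K₂ ⊆ Set.Icc A B := Set.support_indicator_subset
  have hK₂i : Integrable K₂ volume := hKi.congr hK₂e.symm
  have hK₂int : ∫ v, K₂ v = 1 := (integral_congr_ae hK₂e).trans hKint
  -- replace K by K₂ in the goal
  have hdbl : (∫ u in (0:ℝ)..t, ∫ s in (0:ℝ)..T, (1 / h) * K ((s - u) / h) * b (x s))
      = ∫ u in (0:ℝ)..t, ∫ s in (0:ℝ)..T, (1 / h) * K₂ ((s - u) / h) * b (x s) := by
    refine intervalIntegral.integral_congr fun u _ => ?_
    rw [intervalIntegral.integral_of_le hT.le, intervalIntegral.integral_of_le hT.le]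
    refine MeasureTheory.integral_congr_ae (MeasureTheory.ae_restrict_of_ae ?_)
    have hcomp := (qmp_affine u h hh.ne').ae_eq_comp hK₂e
    filter_upwards [hcomp] with s hs
    show (1 / h) * K ((s - u) / h) * b (x s) = (1 / h) * K₂ ((s - u) / h) * b (x s)
    have hs' : K₂ ((s - u) / h) = K ((s - u) / h) := hs
    rw [hs']
  have hAB2 : (∫ u in A..B, K u * |u|) = ∫ u in A..B, K₂ u * |u| := by
    rw [intervalIntegral.integral_of_le hAB, intervalIntegral.integral_of_le hAB]
    refine MeasureTheory.integral_congr_ae (MeasureTheory.ae_restrict_of_ae ?_)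
    filter_upwards [hK₂e] with v hv
    show K v * |v| = K₂ v * |v|
    rw [hv]
  rw [hdbl, hAB2]
  exact bias_bound_aux T M A B h hT hh hM b hbc _ hS0 x hx hbS K₂ hK₂m hK₂0 C hK₂C hK₂i
    hK₂int hK₂supp hAB t ht.1 ht.2
end

section
/- Let y : [0,T] → ℝ be Lipschitz continuous with constant Λ, let K : ℝ → ℝ≥0 be a kernel with ∫_A^B K(u) du = 1 and support in [A,B], and let h > 0. Then for every t ∈ [0,T], |∫_0^T ∫_0^t (1/h)K((s-u)/h) du dy(s) - (y(t) - y(0))| ≤ 2·max(|A|,|B|)·Λ·h, where dy(s) = ẏ(s)ds since y is absolutely continuous. -/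
open Set MeasureTheory

private lemma ae_ne_pt (c : ℝ) : ∀ᵐ s ∂(volume : Measure ℝ), s ≠ c := by
  rw [MeasureTheory.ae_iff]
  have he : {s : ℝ | ¬ s ≠ c} = {c} := by ext s; simp
  rw [he]
  exact measure_singleton c

/-- Bound on the term `η_ε(t)` in Theorem 3.4: for `y` Lipschitz with constant `Λ`
(absolutely continuous with derivative `yd`),
`|∫_0^T (∫_0^t K_h(s-u) du) ẏ(s) ds - (y(t) - y(0))| ≤ 2 max(|A|,|B|) Λ h`. -/
theorem eta_bound (T Λ A B h : ℝ) (hT : 0 < T) (hh : 0 < h) (hΛ : 0 ≤ Λ)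
    (y yd : ℝ → ℝ)
    (hyLip : ∀ s t : ℝ, |y t - y s| ≤ Λ * |t - s|)
    (hyd : ∀ a b : ℝ, y b - y a = ∫ s in a..b, yd s)
    (K : ℝ → ℝ) (hK0 : ∀ v, 0 ≤ K v)
    (hKint : ∫ v in A..B, K v = 1) (hsupp : Function.support K ⊆ Set.Icc A B) :
    ∀ t ∈ Set.Icc (0:ℝ) T,
      |(∫ s in (0:ℝ)..T, (∫ u in (0:ℝ)..t, (1 / h) * K ((s - u) / h)) * yd s)
          - (y t - y 0)|
        ≤ 2 * max |A| |B| * Λ * h := by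
  intro t ht
  obtain ⟨ht0, htT⟩ := ht
  set M := max |A| |B| with hM
  have hM0 : (0:ℝ) ≤ M := le_trans (abs_nonneg A) (le_max_left _ _)
  have hRHS0 : (0:ℝ) ≤ 2 * M * Λ * h := by positivity
  -- A ≤ B
  have hAB : A ≤ B := by
    by_contra hc
    push_neg at hc
    have h1 : 0 ≤ ∫ v in B..A, K v :=
      intervalIntegral.integral_nonneg hc.le (fun u _ => hK0 u)
    have h2 : ∫ v in A..B, K v = -∫ v in B..A, K v := intervalIntegral.integral_symm B A
    rw [hKint] at h2; linarith
  -- K interval integrable on [A,B]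
  have hKii : IntervalIntegrable K volume A B := by
    by_contra hc
    rw [intervalIntegral.integral_undef hc] at hKint
    exact one_ne_zero hKint.symm
  have hKeq : (Icc A B).indicator K = K := indicator_eq_self.2 hsupp
  have Kint : Integrable K volume := by
    have h1 : IntegrableOn K (Icc A B) volume :=
      Iff.mpr integrableOn_Icc_iff_integrableOn_Ioc hKii.1
    rw [← hKeq]
    exact (integrable_indicator_iff measurableSet_Icc).2 h1
  have hKII : ∀ a b : ℝ, IntervalIntegrable K volume a b := fun a b => Kint.intervalIntegrable
  have hKone : ∫ v, K v = 1 := by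
    calc ∫ v, K v = ∫ v, (Icc A B).indicator K v := by rw [hKeq]
      _ = ∫ v in Icc A B, K v := integral_indicator measurableSet_Icc
      _ = ∫ v in Ioc A B, K v := integral_Icc_eq_integral_Ioc
      _ = ∫ v in A..B, K v := (intervalIntegral.integral_of_le hAB).symm
      _ = 1 := hKint
  -- the primitive of K and the weight function w
  set P : ℝ → ℝ := fun x => ∫ v in (0:ℝ)..x, K v with hP
  have hPc : Continuous P := intervalIntegral.continuous_primitive hKII 0
  set w : ℝ → ℝ := fun s => P (s / h) - P ((s - t) / h) with hwdef
  have hwc : Continuous w := by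
    apply Continuous.sub
    · exact hPc.comp (continuous_id.div_const h)
    · exact hPc.comp ((continuous_id.sub continuous_const).div_const h)
  have hw_eq : ∀ s, w s = ∫ v in ((s - t)/h)..(s/h), K v := by
    intro s
    have := intervalIntegral.integral_add_adjacent_intervals
      (hKII 0 ((s - t)/h)) (hKII ((s - t)/h) (s/h))
    simp only [hwdef, hP]
    linarith
  have hle : ∀ s : ℝ, (s - t)/h ≤ s/h := by
    intro s
    have : s - t ≤ s := by linarith
    exact div_le_div_of_nonneg_right this hh.le
  have hw0 : ∀ s, 0 ≤ w s := by
    intro s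
    rw [hw_eq s]
    exact intervalIntegral.integral_nonneg (hle s) (fun u _ => hK0 u)
  have hwind : ∀ s, w s = ∫ v, (Ioc ((s - t)/h) (s/h)).indicator K v := by
    intro s
    rw [hw_eq s, intervalIntegral.integral_of_le (hle s),
      integral_indicator measurableSet_Ioc]
  have hw1 : ∀ s, w s ≤ 1 := by
    intro s
    rw [hwind s, ← hKone]
    apply integral_mono ((integrable_indicator_iff measurableSet_Ioc).2 Kint.integrableOn) Kint
    exact indicator_le_self' (fun x _ => hK0 x)
  -- substitution: the inner integral equals w s
  have hw'_eq : ∀ s, (∫ u in (0:ℝ)..t, (1/h) * K ((s - u)/h)) = w s := by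
    intro s
    rw [intervalIntegral.integral_const_mul]
    have h1 : (∫ u in (0:ℝ)..t, K ((s - u)/h)) = ∫ x in (s - t)..(s - 0), (fun x => K (x/h)) x :=
      intervalIntegral.integral_comp_sub_left (fun x => K (x / h)) s
    have h2 : (∫ x in (s - t)..s, K (x/h)) = h • ∫ x in (s - t)/h..s/h, K x :=
      intervalIntegral.integral_comp_div _ hh.ne'
    rw [sub_zero] at h1
    rw [h1, h2, smul_eq_mul, hw_eq s]
    field_simp
  have hmain : (∫ s in (0:ℝ)..T, (∫ u in (0:ℝ)..t, (1 / h) * K ((s - u) / h)) * yd s)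
      = ∫ s in (0:ℝ)..T, w s * yd s := by
    apply intervalIntegral.integral_congr
    intro s _
    simp only
    rw [hw'_eq s]
  rw [hmain]
  by_cases hWI : IntervalIntegrable (fun s => w s * yd s) volume 0 T
  · -- main case: Fubini
    have hWIon : IntegrableOn (fun s => w s * yd s) (Ioc 0 T) volume := hWI.1
    set μ := volume.restrict (Ioc (0:ℝ) T) with hmu
    set ydm : ℝ → ℝ := fun s => if w s = 0 then 0 else yd s with hydm
    have hwydm : ∀ s, w s * ydm s = w s * yd s := by
      intro s; by_cases hz : w s = 0 <;> simp [hydm, hz]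
    -- measurable version of ydm
    obtain ⟨q₀, hq₀m, hq₀e⟩ := hWIon.aestronglyMeasurable
    set ydm₀ : ℝ → ℝ := fun s => if w s = 0 then 0 else q₀ s / w s with hydm₀
    have hydm₀m : StronglyMeasurable ydm₀ := by
      apply Measurable.stronglyMeasurable
      exact Measurable.ite (measurableSet_eq_fun hwc.measurable measurable_const)
        measurable_const (hq₀m.measurable.div hwc.measurable)
    have hydme : ydm =ᵐ[μ] ydm₀ := by
      filter_upwards [hq₀e] with s hs
      by_cases hz : w s = 0
      · simp [hydm, hydm₀, hz]
      · simp only [hydm, hydm₀, if_neg hz]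
        rw [eq_div_iff hz, mul_comm]
        exact hs
    -- measurable version of K
    obtain ⟨K₁, hK₁m, hK₁e⟩ := hKii.1.aestronglyMeasurable
    set Kg : ℝ → ℝ := (Ioc A B).indicator K₁ with hKgdef
    have hKgm : StronglyMeasurable Kg := hK₁m.indicator measurableSet_Ioc
    have hKge : K =ᵐ[(volume : Measure ℝ)] Kg := by
      have h1 : ∀ᵐ v ∂(volume : Measure ℝ), v ∈ Ioc A B → K v = K₁ v :=
        ae_imp_of_ae_restrict hK₁e
      filter_upwards [h1, ae_ne_pt A] with v hv1 hv2
      by_cases hm : v ∈ Ioc A B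
      · rw [hv1 hm]
        simp [hKgdef, indicator_of_mem hm]
      · have hnic : v ∉ Icc A B := by
          intro hic
          exact hm ⟨lt_of_le_of_ne hic.1 (Ne.symm hv2), hic.2⟩
        have hKv0 : K v = 0 := Function.notMem_support.mp (fun hs => hnic (hsupp hs))
        simp [hKgdef, indicator_of_notMem hm, hKv0]
    -- K vanishes a.e. on intervals where w vanishes
    have hKZ : ∀ᵐ v ∂(volume : Measure ℝ), K v ≠ 0 →
        ∀ s, w s = 0 → v ∉ Ioo ((s - t)/h) (s/h) := by
      have hsingle : ∀ z : {s : ℝ // w s = 0}, ∀ᵐ v ∂(volume : Measure ℝ),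
          v ∈ Ioo ((z.1 - t)/h) (z.1/h) → K v = 0 := by
        rintro ⟨s, hws⟩
        have hint : IntegrableOn K (Ioc ((s - t)/h) (s/h)) volume := Kint.integrableOn
        have hz : ∫ v in Ioc ((s - t)/h) (s/h), K v = 0 := by
          rw [← intervalIntegral.integral_of_le (hle s), ← hw_eq s, hws]
        have hae := (integral_eq_zero_iff_of_nonneg (fun v => hK0 v) hint).1 hz
        have hae' : ∀ᵐ v ∂(volume.restrict (Ioc ((s - t)/h) (s/h))), K v = 0 := by
          filter_upwards [hae] with v hv using hv
        have h3 := ae_imp_of_ae_restrict hae'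
        filter_upwards [h3] with v hv hvm
        exact hv (Ioo_subset_Ioc_self hvm)
      obtain ⟨Tset, hTc, hTeq⟩ := TopologicalSpace.isOpen_iUnion_countable
        (fun z : {s : ℝ // w s = 0} => Ioo ((z.1 - t)/h) (z.1/h)) (fun z => isOpen_Ioo)
      have hcnt : ∀ᵐ v ∂(volume : Measure ℝ), ∀ z ∈ Tset,
          v ∈ Ioo (((z : {s : ℝ // w s = 0}).1 - t)/h) (z.1/h) → K v = 0 :=
        (ae_ball_iff hTc).2 (fun z _ => hsingle z)
      filter_upwards [hcnt] with v hv hKv s hws hmem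
      have hvU : v ∈ ⋃ z : {s : ℝ // w s = 0}, Ioo ((z.1 - t)/h) (z.1/h) :=
        mem_iUnion.2 ⟨⟨s, hws⟩, hmem⟩
      rw [← hTeq] at hvU
      obtain ⟨z, hz1, hz2⟩ := mem_iUnion₂.1 hvU
      exact hKv (hv z hz1 hz2)
    -- the kernel of the double integral
    set F : ℝ → ℝ → ℝ := fun s v => if (s - t)/h < v ∧ v ≤ s/h then K v * ydm s else 0
      with hF
    have hFind : ∀ s v, F s v = (Ioc ((s - t)/h) (s/h)).indicator K v * ydm s := by
      intro s v
      by_cases hm : v ∈ Ioc ((s - t)/h) (s/h)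
      · rw [indicator_of_mem hm]
        exact if_pos (mem_Ioc.1 hm)
      · rw [indicator_of_notMem hm, zero_mul]
        exact if_neg (fun hc => hm (mem_Ioc.2 hc))
    have hws_int : ∀ s, w s * ydm s = ∫ v, F s v := by
      intro s
      rw [hwind s, ← integral_mul_const]
      exact integral_congr_ae (Filter.Eventually.of_forall fun v => (hFind s v).symm)
    -- measurability of the kernel
    set Fg : ℝ × ℝ → ℝ := fun p =>
      if (p.1 - t)/h < p.2 ∧ p.2 ≤ p.1/h then Kg p.2 * ydm₀ p.1 else 0 with hFg
    have hcondm : MeasurableSet {p : ℝ × ℝ | (p.1 - t)/h < p.2 ∧ p.2 ≤ p.1/h} := by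
      have : {p : ℝ × ℝ | (p.1 - t)/h < p.2 ∧ p.2 ≤ p.1/h}
          = {p : ℝ × ℝ | (p.1 - t)/h < p.2} ∩ {p : ℝ × ℝ | p.2 ≤ p.1/h} := rfl
      rw [this]
      exact (measurableSet_lt ((measurable_fst.sub measurable_const).div_const h)
          measurable_snd).inter
        (measurableSet_le measurable_snd (measurable_fst.div_const h))
    have hFgm : StronglyMeasurable Fg := by
      apply Measurable.stronglyMeasurable
      exact Measurable.ite hcondm ((hKgm.measurable.comp measurable_snd).mul
        (hydm₀m.measurable.comp measurable_fst)) measurable_const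
    have hFae : (Function.uncurry F) =ᵐ[μ.prod volume] Fg := by
      have e1 : (ydm ∘ Prod.fst) =ᵐ[μ.prod (volume : Measure ℝ)] (ydm₀ ∘ Prod.fst) :=
        Measure.quasiMeasurePreserving_fst.ae_eq hydme
      have e2 : (K ∘ Prod.snd) =ᵐ[μ.prod (volume : Measure ℝ)] (Kg ∘ Prod.snd) :=
        Measure.quasiMeasurePreserving_snd.ae_eq hKge
      filter_upwards [e1, e2] with p h1 h2
      simp only [Function.comp_apply] at h1 h2
      simp only [Function.uncurry, hF, hFg, h1, h2]
    have hFaesm : AEStronglyMeasurable (Function.uncurry F) (μ.prod volume) :=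
      ⟨Fg, hFgm, hFae⟩
    have hnorm_eq : ∀ s, (∫ v, ‖F s v‖) = w s * |ydm s| := by
      intro s
      have hpt : ∀ v, ‖F s v‖ = (Ioc ((s - t)/h) (s/h)).indicator K v * |ydm s| := by
        intro v
        rw [hFind s v, norm_mul, Real.norm_eq_abs, Real.norm_eq_abs,
          abs_of_nonneg (indicator_nonneg (fun x _ => hK0 x) v)]
      rw [integral_congr_ae (Filter.Eventually.of_forall hpt), integral_mul_const, ← hwind s]
    have hFint : Integrable (Function.uncurry F) (μ.prod volume) := by
      rw [integrable_prod_iff hFaesm]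
      constructor
      · filter_upwards with s
        have he : (fun v => Function.uncurry F (s, v))
            = fun v => (Ioc ((s - t)/h) (s/h)).indicator K v * ydm s :=
          funext fun v => hFind s v
        rw [show (fun v => Function.uncurry F (s, v)) = F s from rfl] at he ⊢
        rw [he]
        exact ((integrable_indicator_iff measurableSet_Ioc).2 Kint.integrableOn).mul_const _
      · apply Integrable.congr hWIon.norm
        filter_upwards with s
        simp only [Function.uncurry_apply_pair]
        rw [hnorm_eq s, Real.norm_eq_abs, abs_mul, abs_of_nonneg (hw0 s)]
        have hq := congrArg abs (hwydm s)
        rw [abs_mul, abs_mul, abs_of_nonneg (hw0 s)] at hq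
        exact hq.symm
    have hswap : ∫ s, (∫ v, F s v) ∂μ = ∫ v, (∫ s, F s v ∂μ) :=
      integral_integral_swap hFint
    -- the limiting profile
    set g' : ℝ → ℝ := fun v => if max 0 (v * h) ≤ min T (v * h + t)
        then y (min T (v * h + t)) - y (max 0 (v * h)) else 0 with hg'
    have hinner : ∀ᵐ v ∂(volume : Measure ℝ), (∫ s, F s v ∂μ) = K v * g' v := by
      filter_upwards [hKZ] with v hv
      by_cases hKv : K v = 0
      · have hz : ∀ s, F s v = 0 := by
          intro s; simp only [hF]; split_ifs <;> simp [hKv]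
        simp [hz, hKv]
      · have hnotin := hv hKv
        have hFv : ∀ s, F s v = K v * (Ico (v * h) (v * h + t)).indicator ydm s := by
          intro s
          simp only [hF]
          by_cases hm : s ∈ Ico (v * h) (v * h + t)
          · rw [indicator_of_mem hm]
            obtain ⟨hm1, hm2⟩ := hm
            refine if_pos ⟨?_, ?_⟩
            · rw [div_lt_iff₀ hh]; linarith
            · rw [le_div_iff₀ hh]; exact hm1
          · rw [indicator_of_notMem hm, mul_zero]
            refine if_neg (fun hc => hm ⟨?_, ?_⟩)
            · rw [le_div_iff₀ hh] at hc; exact hc.2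
            · rw [div_lt_iff₀ hh] at hc; linarith [hc.1]
        calc ∫ s, F s v ∂μ
            = ∫ s, K v * (Ico (v*h) (v*h+t)).indicator ydm s ∂μ :=
              integral_congr_ae (Filter.Eventually.of_forall fun s => hFv s)
          _ = K v * ∫ s, (Ico (v*h) (v*h+t)).indicator ydm s ∂μ := integral_const_mul _ _
          _ = K v * ∫ s in Ico (v*h) (v*h+t), ydm s ∂μ := by
              rw [integral_indicator measurableSet_Ico]
          _ = K v * ∫ s in Ico (v*h) (v*h+t) ∩ Ioc 0 T, ydm s := by
              rw [hmu, Measure.restrict_restrict measurableSet_Ico]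
          _ = K v * ∫ s in Ico (v*h) (v*h+t) ∩ Ioc 0 T, yd s := by
              congr 1
              apply integral_congr_ae
              rw [Filter.EventuallyEq, ae_restrict_iff' (measurableSet_Ico.inter measurableSet_Ioc)]
              filter_upwards [ae_ne_pt (v * h)] with s hsne hsm
              by_cases hz : w s = 0
              · exfalso
                apply hnotin s hz
                obtain ⟨⟨hm1, hm2⟩, _⟩ := hsm
                have hlt : v * h < s := lt_of_le_of_ne hm1 (Ne.symm hsne)
                refine ⟨?_, ?_⟩
                · rw [div_lt_iff₀ hh]; linarith
                · rw [lt_div_iff₀ hh]; exact hlt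
              · simp [hydm, hz]
          _ = K v * ∫ s in Ioc (max 0 (v*h)) (min T (v*h+t)), yd s := by
              congr 1
              apply setIntegral_congr_set
              have e1 : (Ico (v*h) (v*h+t) : Set ℝ) =ᵐ[volume] Ioc (v*h) (v*h+t) :=
                Ico_ae_eq_Ioc
              have e2 : (Ico (v*h) (v*h+t) ∩ Ioc 0 T : Set ℝ)
                  =ᵐ[volume] (Ioc (v*h) (v*h+t) ∩ Ioc 0 T : Set ℝ) :=
                ae_eq_set_inter e1 (Filter.EventuallyEq.refl _ _)
              refine e2.trans ?_
              have he : Ioc (v*h) (v*h+t) ∩ Ioc 0 T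
                  = Ioc (max 0 (v*h)) (min T (v*h+t)) := by
                rw [Ioc_inter_Ioc, max_comm, min_comm]
              rw [he]
              exact Filter.EventuallyEq.refl _ _
          _ = K v * g' v := by
              simp only [hg']
              by_cases hab : max 0 (v*h) ≤ min T (v*h+t)
              · rw [if_pos hab, ← intervalIntegral.integral_of_le hab, ← hyd]
              · rw [if_neg hab, Ioc_eq_empty (fun hlt => hab hlt.le), setIntegral_empty,
                  mul_zero]
    have hchain : (∫ s in (0:ℝ)..T, w s * yd s) = ∫ v, K v * g' v := by
      calc ∫ s in (0:ℝ)..T, w s * yd s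
          = ∫ s in Ioc (0:ℝ) T, w s * yd s := intervalIntegral.integral_of_le hT.le
        _ = ∫ s, w s * ydm s ∂μ :=
            integral_congr_ae (Filter.Eventually.of_forall fun s => (hwydm s).symm)
        _ = ∫ s, (∫ v, F s v) ∂μ :=
            integral_congr_ae (Filter.Eventually.of_forall fun s => hws_int s)
        _ = ∫ v, (∫ s, F s v ∂μ) := hswap
        _ = ∫ v, K v * g' v := integral_congr_ae hinner
    rw [hchain]
    -- final bound
    have hyc : Continuous y := by
      have hL : LipschitzWith (Real.toNNReal Λ) y := by
        apply LipschitzWith.of_dist_le_mul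
        intro a b
        rw [Real.dist_eq, Real.dist_eq, Real.coe_toNNReal Λ hΛ]
        exact hyLip b a
      exact hL.continuous
    have hg'm : Measurable g' := by
      apply Measurable.ite
      · exact measurableSet_le (measurable_const.max (measurable_id.mul_const h))
          (measurable_const.min ((measurable_id.mul_const h).add_const t))
      · exact (hyc.measurable.comp
          (measurable_const.min ((measurable_id.mul_const h).add_const t))).sub
          (hyc.measurable.comp (measurable_const.max (measurable_id.mul_const h)))
      · exact measurable_const
    have hg'bd : ∀ v, |g' v| ≤ Λ * T := by
      intro v
      simp only [hg']
      split_ifs with hab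
      · refine (hyLip _ _).trans ?_
        have h1 : (0:ℝ) ≤ max 0 (v*h) := le_max_left _ _
        have h2 : min T (v*h+t) ≤ T := min_le_left _ _
        have h3 : |min T (v*h+t) - max 0 (v*h)| ≤ T := abs_le.2 ⟨by linarith, by linarith⟩
        exact mul_le_mul_of_nonneg_left h3 hΛ
      · simp only [abs_zero]
        positivity
    have hKg'int : Integrable (fun v => K v * g' v) volume := by
      apply Integrable.mono' (Kint.mul_const (Λ * T))
      · exact ((hKgm.measurable.mul hg'm).aestronglyMeasurable).congr
          ((hKge.mul (Filter.EventuallyEq.refl _ g')).symm)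
      · filter_upwards with v
        rw [norm_mul, Real.norm_eq_abs, abs_of_nonneg (hK0 v), Real.norm_eq_abs]
        exact mul_le_mul_of_nonneg_left (hg'bd v) (hK0 v)
    have hKcint : Integrable (fun v => K v * (y t - y 0)) volume := Kint.mul_const _
    have hkey : ∀ v, K v ≠ 0 → |g' v - (y t - y 0)| ≤ 2 * M * Λ * h := by
      intro v hKv
      have hvm : |v| ≤ M := by
        have hvic : v ∈ Icc A B := hsupp hKv
        obtain ⟨hv1, hv2⟩ := hvic
        rw [abs_le]
        constructor
        · have i1 := neg_abs_le A
          have i2 := le_max_left |A| |B|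
          simp only [hM]
          linarith
        · have i1 := le_abs_self B
          have i2 := le_max_right |A| |B|
          simp only [hM]
          linarith
      have hvh : |v * h| ≤ M * h := by
        rw [abs_mul, abs_of_pos hh]
        exact mul_le_mul_of_nonneg_right hvm hh.le
      have hMh : (0:ℝ) ≤ M * h := by positivity
      simp only [hg']
      split_ifs with hab
      · have hb' : |min T (v*h+t) - t| ≤ M * h := by
          rw [abs_le]
          constructor
          · have hh1 : t - M*h ≤ T := by linarith
            have hh2 : t - M*h ≤ v*h + t := by
              have := neg_abs_le (v*h); linarith
            have := le_min hh1 hh2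
            linarith
          · have hh1 : min T (v*h+t) ≤ v*h + t := min_le_right _ _
            have hh2 := le_abs_self (v*h)
            linarith
        have ha' : |max 0 (v*h) - 0| ≤ M * h := by
          rw [sub_zero, abs_of_nonneg (le_max_left _ _)]
          exact max_le hMh (le_trans (le_abs_self _) hvh)
        have e1 := hyLip t (min T (v*h+t))
        have e2 := hyLip 0 (max 0 (v*h))
        have hre : y (min T (v*h+t)) - y (max 0 (v*h)) - (y t - y 0)
            = (y (min T (v*h+t)) - y t) - (y (max 0 (v*h)) - y 0) := by ring
        rw [hre]
        have habs := abs_sub (y (min T (v*h+t)) - y t) (y (max 0 (v*h)) - y 0)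
        have i1 : Λ * |min T (v*h+t) - t| ≤ Λ * (M*h) := mul_le_mul_of_nonneg_left hb' hΛ
        have i2 : Λ * |max 0 (v*h) - 0| ≤ Λ * (M*h) := mul_le_mul_of_nonneg_left ha' hΛ
        calc |(y (min T (v*h+t)) - y t) - (y (max 0 (v*h)) - y 0)|
            ≤ |y (min T (v*h+t)) - y t| + |y (max 0 (v*h)) - y 0| := habs
          _ ≤ Λ * (M*h) + Λ * (M*h) := by linarith
          _ = 2 * M * Λ * h := by ring
      · push_neg at hab
        have htM : t ≤ M * h := by
          rcases min_lt_iff.1 hab with h1 | h1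
          · rcases lt_max_iff.1 h1 with h2 | h2
            · linarith
            · have := le_abs_self (v*h); linarith
          · rcases lt_max_iff.1 h1 with h2 | h2
            · have := neg_abs_le (v*h); linarith
            · linarith
        rw [zero_sub, abs_neg]
        have hMΛh : (0:ℝ) ≤ M * Λ * h := by positivity
        calc |y t - y 0| ≤ Λ * |t - 0| := hyLip 0 t
          _ = Λ * t := by rw [sub_zero, abs_of_nonneg ht0]
          _ ≤ Λ * (M*h) := mul_le_mul_of_nonneg_left htM hΛ
          _ ≤ 2 * M * Λ * h := by nlinarith
    have hcc : y t - y 0 = ∫ v, K v * (y t - y 0) := by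
      rw [integral_mul_const, hKone, one_mul]
    have hsub : (∫ v, K v * g' v) - (y t - y 0)
        = ∫ v, K v * (g' v - (y t - y 0)) := by
      conv_lhs => rw [hcc]
      rw [← integral_sub hKg'int hKcint]
      exact integral_congr_ae
        (Filter.Eventually.of_forall fun v => (mul_sub (K v) _ _).symm)
    rw [hsub, ← Real.norm_eq_abs]
    calc ‖∫ v, K v * (g' v - (y t - y 0))‖
        ≤ ∫ v, K v * (2 * M * Λ * h) := by
          apply norm_integral_le_of_norm_le (Kint.mul_const _)
          filter_upwards with v
          rw [norm_mul, Real.norm_eq_abs, abs_of_nonneg (hK0 v), Real.norm_eq_abs]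
          by_cases hKv : K v = 0
          · simp [hKv]
          · exact mul_le_mul_of_nonneg_left (hkey v hKv) (hK0 v)
      _ = 2 * M * Λ * h := by rw [integral_mul_const, hKone, one_mul]
  · -- degenerate case: the integral is junk 0 and y t = y 0
    rw [intervalIntegral.integral_undef hWI]
    have hydT : ¬ IntervalIntegrable yd volume 0 T := by
      intro hyi
      apply hWI
      constructor
      · apply Integrable.mono' hyi.1.norm
        · exact (hwc.aestronglyMeasurable.restrict).mul hyi.1.aestronglyMeasurable
        · filter_upwards with s
          rw [norm_mul, Real.norm_eq_abs (w s), abs_of_nonneg (hw0 s)]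
          calc w s * ‖yd s‖ ≤ 1 * ‖yd s‖ := by
                have := norm_nonneg (yd s); nlinarith [hw1 s]
            _ = ‖yd s‖ := one_mul _
      · apply Integrable.mono' hyi.2.norm
        · exact (hwc.aestronglyMeasurable.restrict).mul hyi.2.aestronglyMeasurable
        · filter_upwards with s
          rw [norm_mul, Real.norm_eq_abs (w s), abs_of_nonneg (hw0 s)]
          calc w s * ‖yd s‖ ≤ 1 * ‖yd s‖ := by
                have := norm_nonneg (yd s); nlinarith [hw1 s]
            _ = ‖yd s‖ := one_mul _
    have h0t : y t - y 0 = 0 := by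
      by_cases h1 : IntervalIntegrable yd volume 0 t
      · have h2 : ¬ IntervalIntegrable yd volume t T := fun h2 => hydT (h1.trans h2)
        have e1 : y T - y t = 0 := by rw [hyd t T, intervalIntegral.integral_undef h2]
        have e2 : y T - y 0 = 0 := by rw [hyd 0 T, intervalIntegral.integral_undef hydT]
        linarith
      · rw [hyd 0 t, intervalIntegral.integral_undef h1]
    rw [h0t]
    simpa using hRHS0
end

section
/- Let K : ℝ → ℝ≥0 be a bounded kernel with support in [A,B], ∫_A^B K = 1 and A ≥ 0, let g : [0,T] → ℝ be continuous, t ∈ [0,T), and h_ε = ε^{1/(2-H)} for H ∈ (1/2,1). Define β_ε(t) := ∫_0^t ∫_0^T (1/h_ε)K((s-u)/h_ε) g(s) ds du - ∫_0^t g(u) du. Then ε^{-1/(2-H)}·β_ε(t) → (g(t) - g(0))·∫_A^B K(u)u du as ε → 0⁺. -/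
open Set MeasureTheory Filter Topology intervalIntegral

theorem key_identity (T A B t : ℝ) (hA : 0 ≤ A) (hAB : A < B) (ht0 : 0 ≤ t)
    (K : ℝ → ℝ) (hKI : Integrable K volume) (C : ℝ) (hC : ∀ v, |K v| ≤ C)
    (hsupp : Function.support K ⊆ Set.Icc A B) (hKint : ∫ v in A..B, K v = 1)
    (g : ℝ → ℝ) (hg : Continuous g) (M : ℝ) (hM : ∀ x ∈ Set.Icc (0:ℝ) T, |g x| ≤ M)
    (h : ℝ) (hh : 0 < h) (hbT : t + h * B ≤ T) :
    h⁻¹ * ((∫ u in (0:ℝ)..t, ∫ s in (0:ℝ)..T, (1/h) * K ((s - u)/h) * g s)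
        - ∫ u in (0:ℝ)..t, g u)
      = ∫ v in A..B, K v *
          (h⁻¹ * ((∫ s in t..(t + h*v), g s) - ∫ s in (0:ℝ)..(h*v), g s)) := by
  have hB : 0 < B := lt_of_le_of_lt hA hAB
  have hKii : IntervalIntegrable K volume A B := hKI.intervalIntegrable
  -- step 1: inner integral
  have step1 : ∀ u ∈ Set.uIcc (0:ℝ) t,
      (∫ s in (0:ℝ)..T, (1/h) * K ((s - u)/h) * g s)
        = ∫ v in A..B, K v * g (u + h * v) := by
    intro u hu
    rw [Set.uIcc_of_le ht0] at hu
    have hu0 : 0 ≤ u := hu.1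
    have hbT' : h * B + u ≤ T := by nlinarith [hu.2]
    have hKcomp : Integrable (fun s => K ((s - u)/h)) volume := by
      have h1 : Integrable (fun x : ℝ => K (x * h⁻¹)) volume :=
        hKI.comp_mul_right' (inv_ne_zero hh.ne')
      have h2 : Integrable (fun s : ℝ => K ((s - u) * h⁻¹)) volume := h1.comp_sub_right u
      simpa [div_eq_mul_inv] using h2
    have hFii : ∀ c d : ℝ, IntervalIntegrable (fun s => K ((s - u)/h) * g s) volume c d :=
      fun c d => (hKcomp.intervalIntegrable (a:=c) (b:=d)).mul_continuousOn hg.continuousOn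
    have h0a : (0:ℝ) ≤ h*A + u := by positivity
    have hab : h*A + u ≤ h*B + u := by nlinarith
    have hK0out : ∀ x, x ∉ Set.Icc A B → K x = 0 := fun x hx => by
      by_contra hne; exact hx (hsupp hne)
    have hleft : ∫ s in (0:ℝ)..(h*A+u), K ((s - u)/h) * g s = 0 := by
      rw [intervalIntegral.integral_of_le h0a]
      apply MeasureTheory.integral_eq_zero_of_ae
      have h1 : ∀ᵐ s ∂(volume.restrict (Set.Ioc 0 (h*A+u))), s ∈ Set.Ioc 0 (h*A+u) :=
        ae_restrict_mem measurableSet_Ioc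
      have h2 : ∀ᵐ s ∂(volume.restrict (Set.Ioc 0 (h*A+u))), s ≠ h*A+u := by
        refine ae_restrict_of_ae ?_
        rw [ae_iff]
        simpa using measure_singleton (h*A+u)
      filter_upwards [h1, h2] with s hs hsa
      have hsu : (s - u)/h < A := by
        rw [div_lt_iff₀ hh]
        have : s < h*A + u := lt_of_le_of_ne hs.2 hsa
        linarith
      rw [hK0out _ (fun hc => absurd hc.1 (not_le.mpr hsu)), zero_mul]; rfl
    have hright : ∫ s in (h*B+u)..T, K ((s - u)/h) * g s = 0 := by
      rw [intervalIntegral.integral_of_le hbT']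
      apply MeasureTheory.integral_eq_zero_of_ae
      have h1 : ∀ᵐ s ∂(volume.restrict (Set.Ioc (h*B+u) T)), s ∈ Set.Ioc (h*B+u) T :=
        ae_restrict_mem measurableSet_Ioc
      filter_upwards [h1] with s hs
      have hsu : B < (s - u)/h := by
        rw [lt_div_iff₀ hh]
        have := hs.1
        linarith
      rw [hK0out _ (fun hc => absurd hc.2 (not_le.mpr hsu)), zero_mul]; rfl
    have hsplit : ∫ s in (0:ℝ)..T, K ((s - u)/h) * g s
        = ∫ s in (h*A+u)..(h*B+u), K ((s - u)/h) * g s := by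
      have e1 := intervalIntegral.integral_add_adjacent_intervals (hFii 0 (h*A+u)) (hFii (h*A+u) (h*B+u))
      have e2 := intervalIntegral.integral_add_adjacent_intervals (hFii 0 (h*B+u)) (hFii (h*B+u) T)
      rw [hleft, zero_add] at e1
      rw [hright, add_zero] at e2
      rw [← e2, e1]
    have sub : ∫ v in A..B, K v * g (u + h * v)
        = h⁻¹ • ∫ s in (h*A+u)..(h*B+u), K ((s - u)/h) * g s := by
      rw [← intervalIntegral.integral_comp_mul_add (fun s => K ((s - u)/h) * g s) hh.ne' u]
      apply intervalIntegral.integral_congr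
      intro v _
      have : (h * v + u - u) / h = v := by field_simp; ring
      simp only [this]
      ring_nf
    rw [sub, smul_eq_mul, ← hsplit, ← intervalIntegral.integral_const_mul]
    apply intervalIntegral.integral_congr
    intro s _
    ring
  -- rewrite outer integral
  rw [intervalIntegral.integral_congr step1]
  -- Fubini
  have fub : ∫ u in (0:ℝ)..t, ∫ v in A..B, K v * g (u + h * v)
      = ∫ v in A..B, ∫ u in (0:ℝ)..t, K v * g (u + h * v) := by
    rw [intervalIntegral.integral_of_le ht0, intervalIntegral.integral_of_le hAB.le]
    simp_rw [intervalIntegral.integral_of_le hAB.le, intervalIntegral.integral_of_le ht0]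
    apply MeasureTheory.integral_integral_swap
    set μ := (volume.restrict (Set.Ioc (0:ℝ) t)).prod (volume.restrict (Set.Ioc A B)) with hμ
    have hμr : μ = (volume.prod volume).restrict ((Set.Ioc (0:ℝ) t) ×ˢ (Set.Ioc A B)) :=
      Measure.prod_restrict _ _
    have hsm : AEStronglyMeasurable (fun z : ℝ × ℝ => K z.2 * g (z.1 + h * z.2)) μ := by
      have h1 : AEStronglyMeasurable (fun z : ℝ × ℝ => K z.2) μ :=
        (hKI.aestronglyMeasurable.restrict (s := Set.Ioc A B)).comp_snd
      have h2 : AEStronglyMeasurable (fun z : ℝ × ℝ => g (z.1 + h * z.2)) μ :=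
        (hg.comp (continuous_fst.add (continuous_const.mul continuous_snd))).aestronglyMeasurable
      exact h1.mul h2
    haveI : IsFiniteMeasure μ := by
      refine ⟨?_⟩
      have : μ Set.univ = (volume.restrict (Set.Ioc (0:ℝ) t)) Set.univ
          * (volume.restrict (Set.Ioc A B)) Set.univ := by
        rw [hμ, ← Set.univ_prod_univ, Measure.prod_prod]
      rw [this, Measure.restrict_apply_univ, Measure.restrict_apply_univ]
      exact ENNReal.mul_lt_top (measure_Ioc_lt_top) (measure_Ioc_lt_top)
    have hmem : ∀ᵐ z ∂μ, z ∈ (Set.Ioc (0:ℝ) t) ×ˢ (Set.Ioc A B) := by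
      rw [hμr]
      exact ae_restrict_mem (measurableSet_Ioc.prod measurableSet_Ioc)
    refine MeasureTheory.Integrable.mono' (integrable_const (C * M)) hsm ?_
    filter_upwards [hmem] with z hz
    have h1 : z.1 ∈ Set.Ioc (0:ℝ) t := hz.1
    have h2 : z.2 ∈ Set.Ioc A B := hz.2
    have hx : z.1 + h * z.2 ∈ Set.Icc (0:ℝ) T := by
      constructor
      · nlinarith [h1.1, h2.1]
      · nlinarith [h1.2, h2.2]
    have hCnn : 0 ≤ C := le_trans (abs_nonneg _) (hC 0)
    calc ‖K z.2 * g (z.1 + h * z.2)‖ = |K z.2| * |g (z.1 + h * z.2)| := by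
          rw [Real.norm_eq_abs, abs_mul]
      _ ≤ C * M := mul_le_mul (hC _) (hM _ hx) (abs_nonneg _) hCnn
  rw [fub]
  -- pull out K v and translate
  have e3 : ∀ v, (∫ u in (0:ℝ)..t, K v * g (u + h * v))
      = K v * ∫ s in (h*v)..(t + h*v), g s := by
    intro v
    rw [intervalIntegral.integral_const_mul]
    congr 1
    have := intervalIntegral.integral_comp_add_right (a := (0:ℝ)) (b := t) g (h*v)
    rw [zero_add] at this
    exact this
  simp_rw [e3]
  -- the subtracted term
  have hsub : ∫ u in (0:ℝ)..t, g u = ∫ v in A..B, K v * ∫ u in (0:ℝ)..t, g u := by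
    rw [intervalIntegral.integral_mul_const, hKint, one_mul]
  rw [hsub]
  -- continuity of primitives
  have hgi : ∀ c d : ℝ, IntervalIntegrable g volume c d := fun c d => hg.intervalIntegrable c d
  have eprim : ∀ c d : ℝ, (∫ s in c..d, g s) = (∫ s in (0:ℝ)..d, g s) - ∫ s in (0:ℝ)..c, g s := by
    intro c d
    rw [← intervalIntegral.integral_add_adjacent_intervals (hgi 0 c) (hgi c d)]
    ring
  have hGp : Continuous fun x => ∫ s in (0:ℝ)..x, g s :=
    intervalIntegral.continuous_primitive hgi 0
  have hcont1 : Continuous fun v => ∫ s in (h*v)..(t + h*v), g s := by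
    have e : (fun v => ∫ s in (h*v)..(t + h*v), g s)
        = fun v => (∫ s in (0:ℝ)..(t + h*v), g s) - ∫ s in (0:ℝ)..(h*v), g s :=
      funext fun v => eprim _ _
    rw [e]
    exact (hGp.comp (continuous_const.add (continuous_const.mul continuous_id))).sub
      (hGp.comp (continuous_const.mul continuous_id))
  have hii1 : IntervalIntegrable (fun v => K v * ∫ s in (h*v)..(t + h*v), g s) volume A B :=
    hKii.mul_continuousOn hcont1.continuousOn
  have hii2 : IntervalIntegrable (fun v => K v * ∫ u in (0:ℝ)..t, g u) volume A B :=
    hKii.mul_continuousOn continuousOn_const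
  rw [← intervalIntegral.integral_sub hii1 hii2, ← intervalIntegral.integral_const_mul]
  apply intervalIntegral.integral_congr
  intro v _
  have chasles : (∫ s in (h*v)..(t + h*v), g s) - ∫ u in (0:ℝ)..t, g u
      = (∫ s in t..(t + h*v), g s) - ∫ s in (0:ℝ)..(h*v), g s := by
    have c1 := intervalIntegral.integral_add_adjacent_intervals (hgi (h*v) t) (hgi t (t + h*v))
    have c2 := intervalIntegral.integral_add_adjacent_intervals (hgi 0 (h*v)) (hgi (h*v) t)
    linarith
  dsimp only
  rw [← mul_sub, chasles]
  ring

set_option maxHeartbeats 2000000 in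
theorem beta_aux (T A B : ℝ) (hT : 0 < T) (hA : 0 ≤ A) (hAB : A < B)
    (K : ℝ → ℝ) (hK0 : ∀ v, 0 ≤ K v) (hKbdd : ∃ C, ∀ v, K v ≤ C)
    (hsupp : Function.support K ⊆ Set.Icc A B) (hKint : ∫ v in A..B, K v = 1)
    (hKI : Integrable K volume)
    (g : ℝ → ℝ) (hg : Continuous g) (t : ℝ) (ht : t ∈ Set.Ico (0:ℝ) T)
    (key : ∀ h : ℝ, 0 < h → t + h * B ≤ T →
      h⁻¹ * ((∫ u in (0:ℝ)..t, ∫ s in (0:ℝ)..T, (1/h) * K ((s - u)/h) * g s)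
          - ∫ u in (0:ℝ)..t, g u)
        = ∫ v in A..B, K v *
            (h⁻¹ * ((∫ s in t..(t + h*v), g s) - ∫ s in (0:ℝ)..(h*v), g s))) :
    Tendsto (fun h : ℝ =>
        h⁻¹ * ((∫ u in (0:ℝ)..t, ∫ s in (0:ℝ)..T, (1/h) * K ((s - u)/h) * g s)
            - ∫ u in (0:ℝ)..t, g u))
      (𝓝[>] (0:ℝ)) (𝓝 ((g t - g 0) * ∫ u in A..B, K u * u)) := by
  have hB : 0 < B := lt_of_le_of_lt hA hAB
  have ht0 : 0 ≤ t := ht.1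
  have htT : t < T := ht.2
  have hKii : IntervalIntegrable K volume A B := hKI.intervalIntegrable
  have hgi : ∀ c d : ℝ, IntervalIntegrable g volume c d := fun c d => hg.intervalIntegrable c d
  set L := (g t - g 0) * ∫ u in A..B, K u * u with hLdef
  have hL : L = ∫ v in A..B, K v * (v * (g t - g 0)) := by
    rw [hLdef]
    rw [show (fun v => K v * (v * (g t - g 0))) = fun v => (K v * v) * (g t - g 0) by
      funext v; ring]
    rw [intervalIntegral.integral_mul_const, mul_comm]
  rw [Metric.tendsto_nhdsWithin_nhds]
  intro ε hε
  set ε4 := ε / (4 * (B + 1)) with hε4def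
  have hε4 : 0 < ε4 := by positivity
  have ct := hg.continuousAt (x := t)
  rw [Metric.continuousAt_iff] at ct
  obtain ⟨δ₁, hδ₁, hδ₁p⟩ := ct ε4 hε4
  have c0 := hg.continuousAt (x := 0)
  rw [Metric.continuousAt_iff] at c0
  obtain ⟨δ₂, hδ₂, hδ₂p⟩ := c0 ε4 hε4
  refine ⟨min ((T - t)/B) (min (δ₁/B) (δ₂/B)),
    lt_min (div_pos (sub_pos.mpr htT) hB) (lt_min (div_pos hδ₁ hB) (div_pos hδ₂ hB)), ?_⟩
  intro h hh hdist
  have hh0 : 0 < h := hh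
  rw [Real.dist_eq, sub_zero, abs_of_pos hh0] at hdist
  have hd0 : h < (T - t)/B := lt_of_lt_of_le hdist (min_le_left _ _)
  have hd1 : h < δ₁/B := lt_of_lt_of_le hdist ((min_le_right _ _).trans (min_le_left _ _))
  have hd2 : h < δ₂/B := lt_of_lt_of_le hdist ((min_le_right _ _).trans (min_le_right _ _))
  have hbT : t + h * B ≤ T := by
    have : h * B < T - t := by
      rw [lt_div_iff₀ hB] at hd0
      linarith
    linarith
  rw [key h hh0 hbT, Real.dist_eq]
  -- continuity / integrability of the integrand in v
  have eprim : ∀ c d : ℝ, (∫ s in c..d, g s) = (∫ s in (0:ℝ)..d, g s) - ∫ s in (0:ℝ)..c, g s := by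
    intro c d
    rw [← intervalIntegral.integral_add_adjacent_intervals (hgi 0 c) (hgi c d)]
    ring
  have hGp : Continuous fun x => ∫ s in (0:ℝ)..x, g s :=
    intervalIntegral.continuous_primitive hgi 0
  have hψcont : Continuous fun v =>
      h⁻¹ * ((∫ s in t..(t + h*v), g s) - ∫ s in (0:ℝ)..(h*v), g s) := by
    apply continuous_const.mul
    have e1 : (fun v => ∫ s in t..(t + h*v), g s)
        = fun v => (∫ s in (0:ℝ)..(t + h*v), g s) - ∫ s in (0:ℝ)..t, g s :=
      funext fun v => eprim _ _
    have c1 : Continuous fun v => ∫ s in t..(t + h*v), g s := by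
      rw [e1]
      exact (hGp.comp (continuous_const.add (continuous_const.mul continuous_id))).sub
        continuous_const
    exact c1.sub (hGp.comp (continuous_const.mul continuous_id))
  have hii1 : IntervalIntegrable (fun v => K v *
      (h⁻¹ * ((∫ s in t..(t + h*v), g s) - ∫ s in (0:ℝ)..(h*v), g s))) volume A B :=
    hKii.mul_continuousOn hψcont.continuousOn
  have hii2 : IntervalIntegrable (fun v => K v * (v * (g t - g 0))) volume A B :=
    hKii.mul_continuousOn (by fun_prop)
  have ediff : (∫ v in A..B, K v *
        (h⁻¹ * ((∫ s in t..(t + h*v), g s) - ∫ s in (0:ℝ)..(h*v), g s))) - L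
      = ∫ v in A..B, K v *
          ((h⁻¹ * ((∫ s in t..(t + h*v), g s) - ∫ s in (0:ℝ)..(h*v), g s))
            - v * (g t - g 0)) := by
    rw [hL, ← intervalIntegral.integral_sub hii1 hii2]
    apply intervalIntegral.integral_congr
    intro v _
    dsimp only
    ring
  rw [ediff]
  -- bound the integral
  have hbound : ∀ v ∈ Set.Ioc A B,
      ‖K v * ((h⁻¹ * ((∫ s in t..(t + h*v), g s) - ∫ s in (0:ℝ)..(h*v), g s))
          - v * (g t - g 0))‖ ≤ K v * (2 * B * ε4) := by
    intro v hv
    have hv0 : 0 < v := lt_of_le_of_lt hA hv.1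
    have hvB : v ≤ B := hv.2
    have hhv : 0 ≤ h * v := by positivity
    have d1 : ∫ s in t..(t+h*v), (g s - g t)
        = (∫ s in t..(t+h*v), g s) - h*v*(g t) := by
      rw [intervalIntegral.integral_sub (hgi t _) intervalIntegrable_const,
        intervalIntegral.integral_const, smul_eq_mul]
      ring_nf
    have d2 : ∫ s in (0:ℝ)..(h*v), (g s - g 0)
        = (∫ s in (0:ℝ)..(h*v), g s) - h*v*(g 0) := by
      rw [intervalIntegral.integral_sub (hgi 0 _) intervalIntegrable_const,
        intervalIntegral.integral_const, smul_eq_mul]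
      ring_nf
    have b1 : ‖∫ s in t..(t+h*v), (g s - g t)‖ ≤ ε4 * (h*v) := by
      have := intervalIntegral.norm_integral_le_of_norm_le_const (a := t) (b := t + h*v)
        (C := ε4) (f := fun s => g s - g t) ?_
      · rwa [add_sub_cancel_left, abs_of_nonneg hhv] at this
      · intro s hs
        rw [Set.uIoc_of_le (by linarith)] at hs
        have : dist s t < δ₁ := by
          rw [Real.dist_eq, abs_of_pos (by linarith [hs.1] : (0:ℝ) < s - t)]
          have : s - t ≤ h * v := by linarith [hs.2]
          have hB' : h * v ≤ h * B := by nlinarith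
          have : h * B < δ₁ := by
            rw [lt_div_iff₀ hB] at hd1
            linarith
          linarith
        exact le_of_lt (by simpa [Real.norm_eq_abs, Real.dist_eq] using hδ₁p this)
    have b2 : ‖∫ s in (0:ℝ)..(h*v), (g s - g 0)‖ ≤ ε4 * (h*v) := by
      have := intervalIntegral.norm_integral_le_of_norm_le_const (a := (0:ℝ)) (b := h*v)
        (C := ε4) (f := fun s => g s - g 0) ?_
      · rwa [sub_zero, abs_of_nonneg hhv] at this
      · intro s hs
        rw [Set.uIoc_of_le (by linarith)] at hs
        have : dist s 0 < δ₂ := by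
          rw [Real.dist_eq, sub_zero, abs_of_pos hs.1]
          have : s ≤ h * v := hs.2
          have hB' : h * v ≤ h * B := by nlinarith
          have : h * B < δ₂ := by
            rw [lt_div_iff₀ hB] at hd2
            linarith
          linarith
        exact le_of_lt (by simpa [Real.norm_eq_abs, Real.dist_eq] using hδ₂p this)
    have hψsub : (h⁻¹ * ((∫ s in t..(t + h*v), g s) - ∫ s in (0:ℝ)..(h*v), g s))
        - v * (g t - g 0)
        = h⁻¹ * ((∫ s in t..(t+h*v), (g s - g t)) - ∫ s in (0:ℝ)..(h*v), (g s - g 0)) := by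
      rw [d1, d2]
      field_simp
      ring
    rw [Real.norm_eq_abs, abs_mul, abs_of_nonneg (hK0 v), hψsub]
    have : |h⁻¹ * ((∫ s in t..(t+h*v), (g s - g t)) - ∫ s in (0:ℝ)..(h*v), (g s - g 0))|
        ≤ h⁻¹ * (ε4 * (h*v) + ε4 * (h*v)) := by
      rw [abs_mul, abs_of_pos (inv_pos.mpr hh0)]
      apply mul_le_mul_of_nonneg_left _ (le_of_lt (inv_pos.mpr hh0))
      calc |(∫ s in t..(t+h*v), (g s - g t)) - ∫ s in (0:ℝ)..(h*v), (g s - g 0)|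
          ≤ ‖∫ s in t..(t+h*v), (g s - g t)‖ + ‖∫ s in (0:ℝ)..(h*v), (g s - g 0)‖ := by
            rw [Real.norm_eq_abs, Real.norm_eq_abs]; exact abs_sub _ _
        _ ≤ ε4 * (h*v) + ε4 * (h*v) := add_le_add b1 b2
    refine mul_le_mul_of_nonneg_left (this.trans ?_) (hK0 v)
    have e5 : h⁻¹ * (ε4 * (h*v) + ε4 * (h*v)) = 2 * ε4 * v := by
      field_simp
      ring
    rw [e5]
    nlinarith [hε4.le]
  have hfinal : ‖∫ v in A..B, K v *
      ((h⁻¹ * ((∫ s in t..(t + h*v), g s) - ∫ s in (0:ℝ)..(h*v), g s))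
        - v * (g t - g 0))‖ ≤ |∫ v in A..B, K v * (2 * B * ε4)| := by
    apply intervalIntegral.norm_integral_le_abs_of_norm_le
    · filter_upwards [ae_restrict_mem measurableSet_uIoc] with v hv
      rw [Set.uIoc_of_le hAB.le] at hv
      exact hbound v hv
    · exact hKii.mul_continuousOn continuousOn_const
  rw [Real.norm_eq_abs] at hfinal
  calc |∫ v in A..B, K v *
      ((h⁻¹ * ((∫ s in t..(t + h*v), g s) - ∫ s in (0:ℝ)..(h*v), g s))
        - v * (g t - g 0))| ≤ |∫ v in A..B, K v * (2 * B * ε4)| := hfinal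
    _ = 2 * B * ε4 := by
        rw [intervalIntegral.integral_mul_const, hKint, one_mul]
        exact abs_of_nonneg (by positivity)
    _ < ε := by
        have hmul : ε4 * (4*(B+1)) = ε := by
          rw [hε4def]; field_simp
        rw [← hmul]
        nlinarith [hε4, hB]

/-- Asymptotic bias computation of Proposition 3.8: with `h_ε = ε^{1/(2-H)}` and
`β_ε(t) = ∫_0^t ∫_0^T K_{h_ε}(s-u) g(s) ds du - ∫_0^t g(u) du`,
`ε^{-1/(2-H)} β_ε(t) → (g(t) - g(0)) ∫_A^B K(u) u du` as `ε → 0⁺`. -/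
theorem beta_asymptotics (T H A B : ℝ) (hT : 0 < T) (hH : H ∈ Set.Ioo (1/2 : ℝ) 1)
    (hA : 0 ≤ A) (hAB : A < B)
    (K : ℝ → ℝ) (hK0 : ∀ v, 0 ≤ K v) (hKbdd : ∃ C, ∀ v, K v ≤ C)
    (hsupp : Function.support K ⊆ Set.Icc A B) (hKint : ∫ v in A..B, K v = 1)
    (g : ℝ → ℝ) (hg : ContinuousOn g (Set.Icc 0 T)) (t : ℝ) (ht : t ∈ Set.Ico (0:ℝ) T) :
    Tendsto (fun ε : ℝ =>
        ε ^ (-(1 / (2 - H))) *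
          ((∫ u in (0:ℝ)..t, ∫ s in (0:ℝ)..T,
              (1 / ε ^ (1 / (2 - H))) * K ((s - u) / ε ^ (1 / (2 - H))) * g s)
            - ∫ u in (0:ℝ)..t, g u))
      (𝓝[>] (0:ℝ)) (𝓝 ((g t - g 0) * ∫ u in A..B, K u * u)) := by
  have ht0 : 0 ≤ t := ht.1
  have htT : t < T := ht.2
  -- continuous extension of g
  set G : ℝ → ℝ := fun x => g (max 0 (min x T)) with hGdef
  have hmem : ∀ x : ℝ, max 0 (min x T) ∈ Set.Icc (0:ℝ) T := by
    intro x
    exact ⟨le_max_left _ _, max_le hT.le (min_le_right _ _)⟩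
  have hG : Continuous G :=
    hg.comp_continuous (continuous_const.max (continuous_id.min continuous_const)) hmem
  have hGg : ∀ x ∈ Set.Icc (0:ℝ) T, G x = g x := by
    intro x hx
    rw [hGdef]
    simp only [min_eq_left hx.2, max_eq_right hx.1]
  -- K integrable
  have hKii : IntervalIntegrable K volume A B := by
    by_contra hc
    rw [intervalIntegral.integral_undef hc] at hKint
    exact zero_ne_one hKint
  have hKI : Integrable K volume := by
    have h1 : IntegrableOn K (Set.Icc A B) volume := by
      rw [integrableOn_Icc_iff_integrableOn_Ioc]
      exact (intervalIntegrable_iff_integrableOn_Ioc_of_le hAB.le).mp hKii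
    have := h1.integrable_indicator measurableSet_Icc
    rwa [Set.indicator_eq_self.mpr hsupp] at this
  obtain ⟨C, hC0⟩ := hKbdd
  have hC : ∀ v, |K v| ≤ C := fun v => by
    rw [abs_of_nonneg (hK0 v)]; exact hC0 v
  obtain ⟨M, hM0⟩ := isCompact_Icc.exists_bound_of_continuousOn hG.continuousOn
  have hM : ∀ x ∈ Set.Icc (0:ℝ) T, |G x| ≤ M := fun x hx => hM0 x hx
  -- main limit for G
  have main := beta_aux T A B hT hA hAB K hK0 ⟨C, hC0⟩ hsupp hKint hKI G hG t ht
    (fun h hh hbT => key_identity T A B t hA hAB ht0 K hKI C hC hsupp hKint G hG M hM h hh hbT)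
  -- composition with ε ↦ ε ^ (1/(2-H))
  set p : ℝ := 1 / (2 - H) with hpdef
  have h2H : 0 < 2 - H := by linarith [hH.2]
  have hp : 0 < p := by positivity
  have hcomp : Tendsto (fun ε : ℝ => ε ^ p) (𝓝[>] (0:ℝ)) (𝓝[>] (0:ℝ)) := by
    rw [tendsto_nhdsWithin_iff]
    constructor
    · have hca : ContinuousAt (fun x : ℝ => x ^ p) 0 :=
        Real.continuousAt_rpow_const 0 p (Or.inr hp.le)
      have := hca.tendsto
      rw [Real.zero_rpow hp.ne'] at this
      exact this.mono_left nhdsWithin_le_nhds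
    · filter_upwards [self_mem_nhdsWithin] with ε (hε : (0:ℝ) < ε)
      exact Real.rpow_pos_of_pos hε p
  have final := main.comp hcomp
  have hval : G t - G 0 = g t - g 0 := by
    rw [hGg t ⟨ht0, htT.le⟩, hGg 0 ⟨le_refl _, hT.le⟩]
  rw [hval] at final
  apply final.congr'
  filter_upwards [self_mem_nhdsWithin] with ε (hε : (0:ℝ) < ε)
  have hεp : (0:ℝ) < ε ^ p := Real.rpow_pos_of_pos hε p
  simp only [Function.comp]
  rw [Real.rpow_neg hε.le]
  congr 1
  have E2 : ∫ u in (0:ℝ)..t, G u = ∫ u in (0:ℝ)..t, g u := by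
    apply intervalIntegral.integral_congr
    intro u hu
    rw [Set.uIcc_of_le ht0] at hu
    show G u = g u
    exact hGg u ⟨hu.1, hu.2.trans htT.le⟩
  have E1 : ∀ u : ℝ, (∫ s in (0:ℝ)..T, (1/ε^p) * K ((s - u)/ε^p) * G s)
      = ∫ s in (0:ℝ)..T, (1/ε^p) * K ((s - u)/ε^p) * g s := by
    intro u
    apply intervalIntegral.integral_congr
    intro s hs
    rw [Set.uIcc_of_le hT.le] at hs
    show (1/ε^p) * K ((s - u)/ε^p) * G s = (1/ε^p) * K ((s - u)/ε^p) * g s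
    rw [hGg s hs]
  rw [E2]
  congr 1
  apply intervalIntegral.integral_congr
  intro u _
  exact E1 u
end

section
/- Let y : [0,T] → ℝ be Lipschitz, let t ∈ [0,T) be a point at which the a.e. derivative ẏ admits a version continuous on a neighborhood of both 0 and t, let K : ℝ → ℝ≥0 be bounded with support in [A,B], A ≥ 0 and ∫K = 1, and h_ε = ε^{1/(2-H)}, H ∈ (1/2,1). Define η_ε(t) := ∫_0^T ∫_0^t (1/h_ε)K((s-u)/h_ε) du ẏ(s) ds - (y(t) - y(0)). Then ε^{-1/(2-H)}·η_ε(t) → (ẏ(t) - ẏ(0))·∫_A^B K(u)u du as ε → 0⁺. -/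
open Set MeasureTheory Filter Topology

namespace EtaAux

variable {A B : ℝ} {K : ℝ → ℝ}

lemma K_zero (hsupp : Function.support K ⊆ Set.Icc A B) {v : ℝ} (hv : v ∉ Set.Icc A B) :
    K v = 0 := by
  by_contra h
  exact hv (hsupp (by simpa [Function.mem_support] using h))

lemma K_ii (hKint : ∫ v in A..B, K v = 1) : IntervalIntegrable K volume A B := by
  by_contra h
  rw [intervalIntegral.integral_undef h] at hKint
  exact one_ne_zero hKint.symm

lemma K_integrable (hAB : A ≤ B) (hsupp : Function.support K ⊆ Set.Icc A B)
    (hKint : ∫ v in A..B, K v = 1) : Integrable K volume := by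
  have h1 : IntegrableOn K (Set.Icc A B) volume :=
    (integrableOn_Icc_iff_integrableOn_Ioc (f := K)).mpr ((K_ii hKint).1)
  exact h1.integrable_of_forall_notMem_eq_zero (fun x hx => K_zero hsupp hx)

lemma K_int_zero_low (hsupp : Function.support K ⊆ Set.Icc A B) {c d : ℝ} (hcd : c ≤ d)
    (hd : d ≤ A) : ∫ v in c..d, K v = 0 := by
  rw [intervalIntegral.integral_of_le hcd, integral_Ioc_eq_integral_Ioo]
  rw [setIntegral_congr_fun measurableSet_Ioo
    (g := fun _ => (0:ℝ)) (fun x hx => K_zero hsupp (by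
      simp only [Set.mem_Icc, not_and_or, not_le]
      exact Or.inl (lt_of_lt_of_le hx.2 hd)))]
  simp

lemma K_int_zero_high (hsupp : Function.support K ⊆ Set.Icc A B) {c d : ℝ} (hcd : c ≤ d)
    (hc : B ≤ c) : ∫ v in c..d, K v = 0 := by
  rw [intervalIntegral.integral_of_le hcd]
  rw [setIntegral_congr_fun measurableSet_Ioc
    (g := fun _ => (0:ℝ)) (fun x hx => K_zero hsupp (by
      simp only [Set.mem_Icc, not_and_or, not_le]
      exact Or.inr (lt_of_le_of_lt hc hx.1)))]
  simp

lemma F_zero (hsupp : Function.support K ⊆ Set.Icc A B) {x : ℝ} (hx : x ≤ A) :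
    ∫ v in A..x, K v = 0 := by
  rw [intervalIntegral.integral_symm, K_int_zero_low hsupp hx le_rfl]
  simp

lemma F_one (hAB : A ≤ B) (hsupp : Function.support K ⊆ Set.Icc A B)
    (hKint : ∫ v in A..B, K v = 1) {x : ℝ} (hx : B ≤ x) : ∫ v in A..x, K v = 1 := by
  have Ki := K_integrable hAB hsupp hKint
  rw [← intervalIntegral.integral_add_adjacent_intervals (b := B)
    Ki.intervalIntegrable Ki.intervalIntegrable, hKint, K_int_zero_high hsupp hx le_rfl]
  ring

lemma F_nonneg (hK0 : ∀ v, 0 ≤ K v) (hsupp : Function.support K ⊆ Set.Icc A B) (x : ℝ) :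
    0 ≤ ∫ v in A..x, K v := by
  rcases le_total x A with h | h
  · rw [F_zero hsupp h]
  · exact intervalIntegral.integral_nonneg h (fun u _ => hK0 u)

lemma F_le_one (hAB : A ≤ B) (hK0 : ∀ v, 0 ≤ K v)
    (hsupp : Function.support K ⊆ Set.Icc A B)
    (hKint : ∫ v in A..B, K v = 1) {x : ℝ} (hx : x ≤ B) : ∫ v in A..x, K v ≤ 1 := by
  have Ki := K_integrable hAB hsupp hKint
  have adj : (∫ v in A..x, K v) + ∫ v in x..B, K v = 1 := by
    rw [intervalIntegral.integral_add_adjacent_intervals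
      Ki.intervalIntegrable Ki.intervalIntegrable]
    exact hKint
  have h2 : 0 ≤ ∫ v in x..B, K v := intervalIntegral.integral_nonneg hx (fun u _ => hK0 u)
  linarith

lemma F_compl (hAB : A ≤ B) (hsupp : Function.support K ⊆ Set.Icc A B)
    (hKint : ∫ v in A..B, K v = 1) (x : ℝ) :
    ∫ v in x..B, K v = 1 - ∫ v in A..x, K v := by
  have Ki := K_integrable hAB hsupp hKint
  have adj : (∫ v in A..x, K v) + ∫ v in x..B, K v = 1 := by
    rw [intervalIntegral.integral_add_adjacent_intervals
      Ki.intervalIntegrable Ki.intervalIntegrable]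
    exact hKint
  linarith

lemma F_cont (hAB : A ≤ B) (hsupp : Function.support K ⊆ Set.Icc A B)
    (hKint : ∫ v in A..B, K v = 1) : Continuous (fun x => ∫ v in A..x, K v) :=
  (K_integrable hAB hsupp hKint).continuous_primitive A

/-- inner kernel integral as a rescaled integral of `K` -/
lemma w_eq {h t s : ℝ} (hh : 0 < h) :
    (∫ u in (0:ℝ)..t, (1/h) * K ((s - u)/h)) = ∫ v in (s - t)/h..(s/h), K v := by
  rw [intervalIntegral.integral_const_mul]
  have e1 : (∫ u in (0:ℝ)..t, K ((s - u)/h)) = ∫ x in s - t..s - 0, K (x/h) :=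
    intervalIntegral.integral_comp_sub_left (fun x => K (x/h)) s
  rw [e1, intervalIntegral.integral_comp_div (fun x => K x) hh.ne', sub_zero]
  field_simp
  rw [smul_eq_mul]



section Ident
variable {T t δ h : ℝ} {yd : ℝ → ℝ} {S : Set ℝ}

set_option maxHeartbeats 1000000 in
lemma ident (hA : 0 ≤ A) (hAB : A < B)
    (hsupp : Function.support K ⊆ Set.Icc A B) (hKint : ∫ v in A..B, K v = 1)
    (ht0 : 0 ≤ t)
    (hS : ContinuousOn yd S)
    (hh : 0 < h) (h1 : h * B ≤ t) (h2 : t + h * B ≤ T)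
    (hsub1 : Icc 0 (h*B) ⊆ S) (hsub2 : Icc t (t + h*B) ⊆ S)
    (hQ : IntervalIntegrable yd volume 0 t) :
    (∫ s in (0:ℝ)..T, (∫ u in (0:ℝ)..t, (1/h) * K ((s-u)/h)) * yd s)
      - (∫ s in (0:ℝ)..t, yd s)
    = h * ∫ x in (0:ℝ)..B, (1 - ∫ v in A..x, K v) * (yd (t + h*x) - yd (h*x)) := by
  have hB : 0 < B := lt_of_le_of_lt hA hAB
  have hhB : 0 ≤ h * B := by positivity
  have Ki := K_integrable hAB.le hsupp hKint
  set F : ℝ → ℝ := fun x => ∫ v in A..x, K v with hF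
  set W : ℝ → ℝ := fun s => ∫ v in (s - t)/h..(s/h), K v with hW
  have Fc : Continuous F := F_cont hAB.le hsupp hKint
  have Wdef : ∀ s, W s = F (s/h) - F ((s-t)/h) := by
    intro s
    have adj : (∫ v in (s-t)/h..A, K v) + ∫ v in A..(s/h), K v = W s :=
      intervalIntegral.integral_add_adjacent_intervals
        Ki.intervalIntegrable Ki.intervalIntegrable
    have sym : (∫ v in (s-t)/h..A, K v) = - F ((s-t)/h) := by
      rw [hF]; exact intervalIntegral.integral_symm _ _
    rw [← adj, sym]; ring
  have Wcont : Continuous W := by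
    have : Continuous fun s => F (s/h) - F ((s-t)/h) := by fun_prop
    exact (funext Wdef : W = _) ▸ this
  -- values of W
  have hWlow : ∀ s, s ≤ h*B → W s = F (s/h) := by
    intro s hs
    rw [Wdef s]
    simp only [hF]
    rw [F_zero hsupp (x := (s-t)/h) (by rw [div_le_iff₀ hh]; nlinarith), sub_zero]
  have hWmid : ∀ s, h*B ≤ s → s ≤ t → W s = 1 := by
    intro s hs hst
    rw [Wdef s]
    simp only [hF]
    rw [F_zero hsupp (x := (s-t)/h) (by rw [div_le_iff₀ hh]; nlinarith),
      F_one hAB.le hsupp hKint (x := s/h) (by rw [le_div_iff₀ hh]; nlinarith)]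
    ring
  have hWup : ∀ s, t ≤ s → W s = 1 - F ((s-t)/h) := by
    intro s hs
    rw [Wdef s]
    simp only [hF]
    rw [F_one hAB.le hsupp hKint (x := s/h) (by rw [le_div_iff₀ hh]; nlinarith)]
  have hWhi : ∀ s, t + h*B ≤ s → W s = 0 := by
    intro s hs
    rw [Wdef s]
    simp only [hF]
    rw [F_one hAB.le hsupp hKint (x := s/h) (by rw [le_div_iff₀ hh]; nlinarith),
      F_one hAB.le hsupp hKint (x := (s-t)/h) (by rw [le_div_iff₀ hh]; nlinarith)]
    ring
  -- rewrite the kernel integral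
  have step0 : (∫ s in (0:ℝ)..T, (∫ u in (0:ℝ)..t, (1/h) * K ((s-u)/h)) * yd s)
      = ∫ s in (0:ℝ)..T, W s * yd s := by
    apply intervalIntegral.integral_congr
    intro s _
    simp only [hW]
    rw [w_eq hh]
  rw [step0]
  -- integrability of pieces
  have hyd0hB : ContinuousOn yd (Icc 0 (h*B)) := hS.mono hsub1
  have hydt : ContinuousOn yd (Icc t (t+h*B)) := hS.mono hsub2
  have I1 : IntervalIntegrable (fun s => W s * yd s) volume 0 (h*B) := by
    apply ContinuousOn.intervalIntegrable
    rw [uIcc_of_le hhB]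
    exact Wcont.continuousOn.mul hyd0hB
  have IydhB : IntervalIntegrable yd volume 0 (h*B) := by
    apply ContinuousOn.intervalIntegrable
    rw [uIcc_of_le hhB]; exact hyd0hB
  have Iyd2 : IntervalIntegrable yd volume (h*B) t :=
    hQ.mono_set (by rw [uIcc_of_le h1, uIcc_of_le ht0]; exact Icc_subset_Icc hhB le_rfl)
  have I2 : IntervalIntegrable (fun s => W s * yd s) volume (h*B) t :=
    Iyd2.continuousOn_mul Wcont.continuousOn
  have I3 : IntervalIntegrable (fun s => W s * yd s) volume t (t+h*B) := by
    apply ContinuousOn.intervalIntegrable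
    rw [uIcc_of_le (by linarith)]
    exact Wcont.continuousOn.mul hydt
  have E4 : EqOn (fun s => W s * yd s) (fun _ => (0:ℝ)) (uIcc (t+h*B) T) := by
    intro s hs
    rw [uIcc_of_le h2] at hs
    simp only
    rw [hWhi s hs.1, zero_mul]
  have I4 : IntervalIntegrable (fun s => W s * yd s) volume (t+h*B) T := by
    apply ContinuousOn.intervalIntegrable
    exact continuousOn_const.congr E4
  have T4 : (∫ s in (t+h*B)..T, W s * yd s) = 0 := by
    rw [intervalIntegral.integral_congr E4]; simp
  -- splitting
  have s1 : (∫ s in (0:ℝ)..(h*B), W s * yd s) + (∫ s in (h*B)..t, W s * yd s)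
      = ∫ s in (0:ℝ)..t, W s * yd s :=
    intervalIntegral.integral_add_adjacent_intervals I1 I2
  have s2 : (∫ s in (0:ℝ)..t, W s * yd s) + (∫ s in t..(t+h*B), W s * yd s)
      = ∫ s in (0:ℝ)..(t+h*B), W s * yd s :=
    intervalIntegral.integral_add_adjacent_intervals (I1.trans I2) I3
  have s3 : (∫ s in (0:ℝ)..(t+h*B), W s * yd s) + (∫ s in (t+h*B)..T, W s * yd s)
      = ∫ s in (0:ℝ)..T, W s * yd s :=
    intervalIntegral.integral_add_adjacent_intervals ((I1.trans I2).trans I3) I4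
  have s4 : (∫ s in (0:ℝ)..(h*B), yd s) + (∫ s in (h*B)..t, yd s) = ∫ s in (0:ℝ)..t, yd s :=
    intervalIntegral.integral_add_adjacent_intervals IydhB Iyd2
  have M' : (∫ s in (h*B)..t, W s * yd s) = ∫ s in (h*B)..t, yd s := by
    apply intervalIntegral.integral_congr
    intro s hs
    rw [uIcc_of_le h1] at hs
    simp only
    rw [hWmid s hs.1 hs.2, one_mul]
  -- reduce to two boundary terms
  have red : (∫ s in (0:ℝ)..T, W s * yd s) - (∫ s in (0:ℝ)..t, yd s)
      = (∫ s in (0:ℝ)..(h*B), (W s - 1) * yd s) + ∫ s in t..(t+h*B), W s * yd s := by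
    have e : (∫ s in (0:ℝ)..(h*B), (W s - 1) * yd s)
        = (∫ s in (0:ℝ)..(h*B), W s * yd s) - ∫ s in (0:ℝ)..(h*B), yd s := by
      rw [← intervalIntegral.integral_sub I1 IydhB]
      apply intervalIntegral.integral_congr
      intro s _; simp only; ring
    rw [e]; linarith
  rw [red]
  -- first boundary term
  have T1 : (∫ s in (0:ℝ)..(h*B), (W s - 1) * yd s)
      = h * ∫ x in (0:ℝ)..B, (F x - 1) * yd (h*x) := by
    have e1 : (∫ s in (0:ℝ)..(h*B), (W s - 1) * yd s)
        = ∫ s in (0:ℝ)..(h*B), (fun x => (F x - 1) * yd (h*x)) (s/h) := by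
      apply intervalIntegral.integral_congr
      intro s hs
      rw [uIcc_of_le hhB] at hs
      simp only
      rw [hWlow s hs.2, mul_div_cancel₀ _ hh.ne']
    have e2 := intervalIntegral.integral_comp_div (a := (0:ℝ)) (b := h*B)
      (fun x => (F x - 1) * yd (h*x)) hh.ne'
    rw [e1, e2, zero_div, mul_div_cancel_left₀ _ hh.ne', smul_eq_mul]
  -- second boundary term
  have T2 : (∫ s in t..(t+h*B), W s * yd s)
      = h * ∫ x in (0:ℝ)..B, (1 - F x) * yd (t + h*x) := by
    have e1 : (∫ s in t..(t+h*B), W s * yd s)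
        = ∫ s in t..(t+h*B), (fun u => (1 - F (u/h)) * yd (u + t)) (s - t) := by
      apply intervalIntegral.integral_congr
      intro s hs
      rw [uIcc_of_le (by linarith : t ≤ t + h*B)] at hs
      simp only
      rw [hWup s hs.1, sub_add_cancel]
    have esub := intervalIntegral.integral_comp_sub_right (a := t) (b := t + h*B)
      (fun u => (1 - F (u/h)) * yd (u + t)) t
    rw [e1, esub, sub_self, add_sub_cancel_left]
    have e2 : (∫ u in (0:ℝ)..(h*B), (1 - F (u/h)) * yd (u + t))
        = ∫ u in (0:ℝ)..(h*B), (fun x => (1 - F x) * yd (t + h*x)) (u/h) := by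
      apply intervalIntegral.integral_congr
      intro u _
      simp only
      rw [mul_div_cancel₀ _ hh.ne', add_comm]
    have e3 := intervalIntegral.integral_comp_div (a := (0:ℝ)) (b := h*B)
      (fun x => (1 - F x) * yd (t + h*x)) hh.ne'
    rw [e2, e3, zero_div, mul_div_cancel_left₀ _ hh.ne', smul_eq_mul]
  rw [T1, T2]
  -- combine
  have m1 : MapsTo (fun x : ℝ => h * x) (Icc 0 B) (Icc 0 (h*B)) := by
    intro x hx
    exact ⟨mul_nonneg hh.le hx.1, mul_le_mul_of_nonneg_left hx.2 hh.le⟩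
  have m2 : MapsTo (fun x : ℝ => t + h * x) (Icc 0 B) (Icc t (t + h*B)) := by
    intro x hx
    simp only [mem_Icc] at hx ⊢
    constructor
    · nlinarith [mul_nonneg hh.le hx.1]
    · nlinarith [mul_le_mul_of_nonneg_left hx.2 hh.le]
  have c1 : IntervalIntegrable (fun x => (F x - 1) * yd (h*x)) volume 0 B := by
    apply ContinuousOn.intervalIntegrable
    rw [uIcc_of_le hB.le]
    exact (Fc.continuousOn.sub continuousOn_const).mul (hyd0hB.comp (by fun_prop) m1)
  have c2 : IntervalIntegrable (fun x => (1 - F x) * yd (t + h*x)) volume 0 B := by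
    apply ContinuousOn.intervalIntegrable
    rw [uIcc_of_le hB.le]
    exact (continuousOn_const.sub Fc.continuousOn).mul (hydt.comp (by fun_prop) m2)
  rw [← mul_add, ← intervalIntegral.integral_add c1 c2]
  congr 1
  apply intervalIntegral.integral_congr
  intro x _
  simp only
  ring

lemma W_one (hA : 0 ≤ A) (hAB : A < B)
    (hsupp : Function.support K ⊆ Set.Icc A B) (hKint : ∫ v in A..B, K v = 1)
    {h t s : ℝ} (hh : 0 < h) (hs1 : h*B ≤ s) (hs2 : s ≤ t) :
    (∫ v in (s - t)/h..(s/h), K v) = 1 := by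
  have Ki := K_integrable hAB.le hsupp hKint
  have adj : (∫ v in (s-t)/h..A, K v) + ∫ v in A..(s/h), K v = ∫ v in (s - t)/h..(s/h), K v :=
    intervalIntegral.integral_add_adjacent_intervals Ki.intervalIntegrable Ki.intervalIntegrable
  have z1 : (∫ v in (s-t)/h..A, K v) = 0 := by
    apply K_int_zero_low hsupp ?_ le_rfl
    rw [div_le_iff₀ hh]
    nlinarith
  have z2 : (∫ v in A..(s/h), K v) = 1 :=
    F_one hAB.le hsupp hKint (by rw [le_div_iff₀ hh]; nlinarith)
  rw [← adj, z1, z2]; ring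

lemma fubini_const (hA : 0 ≤ A) (hAB : A < B) (hK0 : ∀ v, 0 ≤ K v)
    (hKbdd : ∃ C, ∀ v, K v ≤ C) (hsupp : Function.support K ⊆ Set.Icc A B)
    (hKint : ∫ v in A..B, K v = 1) :
    (∫ x in (0:ℝ)..B, (1 - ∫ v in A..x, K v)) = ∫ u in A..B, K u * u := by
  have hB : 0 < B := lt_of_le_of_lt hA hAB
  have Ki := K_integrable hAB.le hsupp hKint
  obtain ⟨C, hC⟩ := hKbdd
  have hC0 : (0:ℝ) ≤ C := le_trans (hK0 A) (hC A)
  set E : Set (ℝ×ℝ) := {p | p.1 < p.2} with hEdef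
  set φ : ℝ × ℝ → ℝ := fun p => E.indicator (fun q => K q.2) p with hφ
  have hE : MeasurableSet E := measurableSet_lt measurable_fst measurable_snd
  have step1 : ∀ x ∈ Ioc (0:ℝ) B, (1 - ∫ v in A..x, K v) = ∫ v in Ioc (0:ℝ) B, φ (x, v) := by
    intro x hx
    have e : ∀ v, φ (x,v) = (Ioi x).indicator K v := by
      intro v
      by_cases hxv : x < v <;> simp [hφ, hEdef, Set.indicator_apply, hxv]
    rw [← F_compl hAB.le hsupp hKint x, intervalIntegral.integral_of_le hx.2]
    have hset : Ioc x B = Ioc (0:ℝ) B ∩ Ioi x := by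
      ext v
      simp only [mem_Ioc, mem_inter_iff, mem_Ioi]
      constructor
      · rintro ⟨h1, h2⟩; exact ⟨⟨lt_of_le_of_lt hx.1.le h1, h2⟩, h1⟩
      · rintro ⟨⟨_, h2⟩, h3⟩; exact ⟨h3, h2⟩
    calc ∫ v in Ioc x B, K v = ∫ v in Ioc (0:ℝ) B ∩ Ioi x, K v := by rw [hset]
      _ = ∫ v in Ioc (0:ℝ) B, (Ioi x).indicator K v :=
          (setIntegral_indicator measurableSet_Ioi).symm
      _ = ∫ v in Ioc (0:ℝ) B, φ (x, v) :=
          setIntegral_congr_fun measurableSet_Ioc (fun v _ => (e v).symm)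
  have lhs_eq : (∫ x in (0:ℝ)..B, (1 - ∫ v in A..x, K v))
      = ∫ x in Ioc (0:ℝ) B, ∫ v in Ioc (0:ℝ) B, φ (x, v) := by
    rw [intervalIntegral.integral_of_le hB.le]
    exact setIntegral_congr_fun measurableSet_Ioc step1
  haveI fin : IsFiniteMeasure (volume.restrict (Ioc (0:ℝ) B)) :=
    ⟨by rw [Measure.restrict_apply_univ]; exact measure_Ioc_lt_top⟩
  have hmeas : AEStronglyMeasurable φ
      ((volume.restrict (Ioc (0:ℝ) B)).prod (volume.restrict (Ioc (0:ℝ) B))) :=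
    AEStronglyMeasurable.indicator (Ki.aestronglyMeasurable.restrict.comp_snd) hE
  have hint : Integrable φ
      ((volume.restrict (Ioc (0:ℝ) B)).prod (volume.restrict (Ioc (0:ℝ) B))) := by
    apply Integrable.mono' (integrable_const C) hmeas
    filter_upwards with p
    simp only [Real.norm_eq_abs]
    rw [abs_of_nonneg (Set.indicator_nonneg (fun q _ => hK0 q.2) p)]
    by_cases hp : p ∈ E
    · rw [Set.indicator_of_mem hp]; exact hC p.2
    · rw [Set.indicator_of_notMem hp]; exact hC0
  have swap := MeasureTheory.integral_integral_swap (f := fun x v => φ (x, v)) hint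
  rw [lhs_eq, swap]
  have inner : ∀ v ∈ Ioc (0:ℝ) B, (∫ x in Ioc (0:ℝ) B, φ (x,v)) = K v * v := by
    intro v hv
    have e : ∀ x, φ (x, v) = (Iio v).indicator (fun _ => K v) x := by
      intro x
      by_cases hxv : x < v <;> simp [hφ, hEdef, Set.indicator_apply, hxv]
    rw [setIntegral_congr_fun measurableSet_Ioc (fun x _ => e x),
      setIntegral_indicator measurableSet_Iio]
    have eset : Ioc (0:ℝ) B ∩ Iio v = Ioo 0 v := by
      ext x
      simp only [mem_inter_iff, mem_Ioc, mem_Iio, mem_Ioo]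
      constructor
      · rintro ⟨⟨h1, _⟩, h3⟩; exact ⟨h1, h3⟩
      · rintro ⟨h1, h2⟩; exact ⟨⟨h1, le_trans h2.le hv.2⟩, h2⟩
    rw [eset, setIntegral_const, Real.volume_real_Ioo_of_le hv.1.le, sub_zero,
      smul_eq_mul, mul_comm]
  rw [setIntegral_congr_fun measurableSet_Ioc inner, ← intervalIntegral.integral_of_le hB.le]
  have i1 : IntervalIntegrable (fun u => K u * u) volume 0 A :=
    Ki.intervalIntegrable.mul_continuousOn continuousOn_id
  have i2 : IntervalIntegrable (fun u => K u * u) volume A B :=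
    Ki.intervalIntegrable.mul_continuousOn continuousOn_id
  have adj := intervalIntegral.integral_add_adjacent_intervals i1 i2
  have z : (∫ u in (0:ℝ)..A, K u * u) = 0 := by
    rw [intervalIntegral.integral_of_le hA, integral_Ioc_eq_integral_Ioo,
      setIntegral_congr_fun measurableSet_Ioo (g := fun _ => (0:ℝ))
        (fun u hu => by
          rw [K_zero hsupp (fun hmem => absurd hmem.1 (not_le.mpr hu.2)), zero_mul])]
    simp
  rw [← adj, z, zero_add]

lemma deriv_nonpos_aux {yd : ℝ → ℝ} {p ρ : ℝ} (hρ : 0 < ρ)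
    (hc : ContinuousOn yd (Icc p (p+ρ)))
    (hz : ∀ s ∈ Icc p (p+ρ), (∫ x in p..s, yd x) = 0) : yd p ≤ 0 := by
  by_contra hpos
  push_neg at hpos
  have cw : ContinuousWithinAt yd (Icc p (p+ρ)) p := hc p (left_mem_Icc.mpr (by linarith))
  have hev : ∀ᶠ x in 𝓝[Icc p (p+ρ)] p, yd p / 2 < yd x :=
    Filter.Tendsto.eventually_const_lt (by linarith) cw
  have hev' : {x | yd p / 2 < yd x} ∈ 𝓝[Icc p (p+ρ)] p := hev
  rw [Metric.mem_nhdsWithin_iff] at hev'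
  obtain ⟨ε, hε, hsub⟩ := hev'
  set ρ' := min (ε/2) ρ with hρ'def
  have hρ'0 : 0 < ρ' := lt_min (by linarith) hρ
  have hρ'ρ : ρ' ≤ ρ := min_le_right _ _
  have hmemIcc : ∀ x ∈ Icc p (p+ρ'), yd p / 2 ≤ yd x := by
    intro x hx
    refine le_of_lt (hsub ⟨?_, ⟨hx.1, by linarith [hx.2]⟩⟩)
    rw [Metric.mem_ball, Real.dist_eq, abs_of_nonneg (by linarith [hx.1])]
    have : x - p ≤ ρ' := by linarith [hx.2]
    have : ρ' ≤ ε/2 := min_le_left _ _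
    linarith
  have hint : IntervalIntegrable yd volume p (p+ρ') := by
    apply ContinuousOn.intervalIntegrable
    rw [uIcc_of_le (by linarith)]
    exact hc.mono (Icc_subset_Icc le_rfl (by linarith))
  have hmono := intervalIntegral.integral_mono_on (by linarith : p ≤ p + ρ')
    intervalIntegrable_const hint hmemIcc
  rw [hz (p+ρ') ⟨by linarith, by linarith⟩, intervalIntegral.integral_const,
    smul_eq_mul] at hmono
  nlinarith

lemma deriv_zero {yd : ℝ → ℝ} {p ρ : ℝ} (hρ : 0 < ρ)
    (hc : ContinuousOn yd (Icc p (p+ρ)))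
    (hz : ∀ s ∈ Icc p (p+ρ), (∫ x in p..s, yd x) = 0) : yd p = 0 := by
  have h1 := deriv_nonpos_aux hρ hc hz
  have h2 := deriv_nonpos_aux (yd := fun x => - yd x) hρ hc.neg
    (fun s hs => by rw [intervalIntegral.integral_neg, hz s hs, neg_zero])
  simp only [neg_nonpos] at h2
  linarith

lemma claimA (hA : 0 ≤ A) (hAB : A < B) (hK0 : ∀ v, 0 ≤ K v)
    (hKbdd : ∃ C, ∀ v, K v ≤ C) (hsupp : Function.support K ⊆ Set.Icc A B)
    (hKint : ∫ v in A..B, K v = 1)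
    {t h0 : ℝ} {yd : ℝ → ℝ} (ht0 : 0 ≤ t) (hh0 : 0 < h0)
    (hc0 : ContinuousOn yd (Icc 0 (h0*B))) (hct : ContinuousOn yd (Icc t (t + h0*B))) :
    Tendsto (fun h => ∫ x in (0:ℝ)..B, (1 - ∫ v in A..x, K v) * (yd (t + h*x) - yd (h*x)))
      (𝓝[>] (0:ℝ)) (𝓝 ((yd t - yd 0) * ∫ u in A..B, K u * u)) := by
  have hB : 0 < B := lt_of_le_of_lt hA hAB
  have hh0B : 0 < h0 * B := by positivity
  set F : ℝ → ℝ := fun x => ∫ v in A..x, K v with hF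
  have Fc : Continuous F := F_cont hAB.le hsupp hKint
  obtain ⟨M0, hM0⟩ := isCompact_Icc.exists_bound_of_continuousOn hc0
  obtain ⟨Mt, hMt⟩ := isCompact_Icc.exists_bound_of_continuousOn hct
  have hIoc : Ioc (0:ℝ) h0 ∈ 𝓝[>] (0:ℝ) := Ioc_mem_nhdsGT_of_mem (left_mem_Ico.mpr hh0)
  have main : Tendsto (fun h => ∫ x in (0:ℝ)..B, (1 - F x) * (yd (t + h*x) - yd (h*x)))
      (𝓝[>] (0:ℝ)) (𝓝 (∫ x in (0:ℝ)..B, (1 - F x) * (yd t - yd 0))) := by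
    apply intervalIntegral.tendsto_integral_filter_of_dominated_convergence
      (bound := fun _ => |Mt| + |M0|)
    · filter_upwards [hIoc] with h hh
      apply ContinuousOn.aestronglyMeasurable ?_ measurableSet_uIoc
      have m0 : MapsTo (fun x : ℝ => h * x) (Icc 0 B) (Icc 0 (h0*B)) := by
        intro x hx
        simp only [mem_Icc] at hx ⊢
        exact ⟨mul_nonneg hh.1.le hx.1, mul_le_mul hh.2 hx.2 hx.1 hh0.le⟩
      have mt : MapsTo (fun x : ℝ => t + h * x) (Icc 0 B) (Icc t (t + h0*B)) := by
        intro x hx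
        simp only [mem_Icc] at hx ⊢
        constructor
        · nlinarith [mul_nonneg hh.1.le hx.1]
        · nlinarith [mul_le_mul hh.2 hx.2 hx.1 hh0.le]
      have : ContinuousOn (fun x => (1 - F x) * (yd (t + h*x) - yd (h*x))) (Icc 0 B) :=
        (continuousOn_const.sub Fc.continuousOn).mul
          ((hct.comp (by fun_prop) mt).sub (hc0.comp (by fun_prop) m0))
      apply this.mono
      rw [uIoc_of_le hB.le]
      exact Ioc_subset_Icc_self
    · filter_upwards [hIoc] with h hh
      apply Filter.Eventually.of_forall
      intro x hx
      rw [uIoc_of_le hB.le] at hx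
      have hF01 : 0 ≤ F x ∧ F x ≤ 1 :=
        ⟨F_nonneg hK0 hsupp x, F_le_one hAB.le hK0 hsupp hKint hx.2⟩
      have hb1 : ‖yd (t + h*x)‖ ≤ |Mt| := by
        refine le_trans (hMt _ ?_) (le_abs_self Mt)
        simp only [mem_Icc]
        constructor
        · nlinarith [mul_nonneg hh.1.le hx.1.le]
        · nlinarith [mul_le_mul hh.2 hx.2 hx.1.le hh0.le]
      have hb0 : ‖yd (h*x)‖ ≤ |M0| := by
        refine le_trans (hM0 _ ?_) (le_abs_self M0)
        simp only [mem_Icc]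
        exact ⟨mul_nonneg hh.1.le hx.1.le, mul_le_mul hh.2 hx.2 hx.1.le hh0.le⟩
      rw [Real.norm_eq_abs, abs_mul]
      have h1 : |1 - F x| ≤ 1 := by rw [abs_le]; constructor <;> linarith [hF01.1, hF01.2]
      calc |1 - F x| * |yd (t + h*x) - yd (h*x)| ≤ 1 * |yd (t + h*x) - yd (h*x)| := by
            apply mul_le_mul_of_nonneg_right h1 (abs_nonneg _)
        _ = |yd (t + h*x) - yd (h*x)| := one_mul _
        _ ≤ ‖yd (t + h*x)‖ + ‖yd (h*x)‖ := by
            rw [← Real.norm_eq_abs]; exact norm_sub_le _ _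
        _ ≤ |Mt| + |M0| := add_le_add hb1 hb0
    · exact intervalIntegrable_const
    · apply Filter.Eventually.of_forall
      intro x hx
      rw [uIoc_of_le hB.le] at hx
      have l1 : Tendsto (fun h : ℝ => yd (t + h*x)) (𝓝[>] 0) (𝓝 (yd t)) := by
        have cw : ContinuousWithinAt yd (Icc t (t+h0*B)) t :=
          hct t (left_mem_Icc.mpr (by linarith))
        have l1' : Tendsto (fun h : ℝ => t + h*x) (𝓝[>] 0) (𝓝[Icc t (t+h0*B)] t) := by
          rw [tendsto_nhdsWithin_iff]
          constructor
          · have hcont2 : Tendsto (fun h : ℝ => t + h*x) (𝓝 0) (𝓝 t) := by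
              have hcc : Continuous (fun h : ℝ => t + h*x) := by fun_prop
              have := hcc.tendsto 0
              simpa using this
            exact hcont2.mono_left nhdsWithin_le_nhds
          · filter_upwards [hIoc] with h hh
            simp only [mem_Icc]
            constructor
            · nlinarith [mul_nonneg hh.1.le hx.1.le]
            · nlinarith [mul_le_mul hh.2 hx.2 hx.1.le hh0.le]
        exact cw.tendsto.comp l1'
      have l0 : Tendsto (fun h : ℝ => yd (h*x)) (𝓝[>] 0) (𝓝 (yd 0)) := by
        have cw : ContinuousWithinAt yd (Icc 0 (h0*B)) 0 :=
          hc0 0 (left_mem_Icc.mpr (by linarith))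
        have l0' : Tendsto (fun h : ℝ => h*x) (𝓝[>] 0) (𝓝[Icc 0 (h0*B)] 0) := by
          rw [tendsto_nhdsWithin_iff]
          constructor
          · have hcont2 : Tendsto (fun h : ℝ => h*x) (𝓝 0) (𝓝 0) := by
              have hcc : Continuous (fun h : ℝ => h*x) := by fun_prop
              have := hcc.tendsto 0
              simpa using this
            exact hcont2.mono_left nhdsWithin_le_nhds
          · filter_upwards [hIoc] with h hh
            simp only [mem_Icc]
            exact ⟨mul_nonneg hh.1.le hx.1.le, mul_le_mul hh.2 hx.2 hx.1.le hh0.le⟩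
        exact cw.tendsto.comp l0'
      exact (l1.sub l0).const_mul _
  have val : (∫ x in (0:ℝ)..B, (1 - F x) * (yd t - yd 0))
      = (yd t - yd 0) * ∫ u in A..B, K u * u := by
    rw [intervalIntegral.integral_mul_const]
    simp only [hF]
    rw [fubini_const hA hAB hK0 hKbdd hsupp hKint, mul_comm]
  rw [val] at main
  exact main

end Ident

end EtaAux

open EtaAux

/-- Asymptotic bias identification for `η_ε(t)` in Proposition 3.8: for `y` Lipschitz with
a.e. derivative `yd` continuous near `0` and near `t`, with `h_ε = ε^{1/(2-H)}` and
`η_ε(t) = ∫_0^T (∫_0^t K_{h_ε}(s-u) du) ẏ(s) ds - (y(t) - y(0))`,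
`ε^{-1/(2-H)} η_ε(t) → (ẏ(t) - ẏ(0)) ∫_A^B K(u) u du` as `ε → 0⁺`. -/
theorem eta_asymptotics (T H A B : ℝ) (hT : 0 < T) (hH : H ∈ Set.Ioo (1/2 : ℝ) 1)
    (hA : 0 ≤ A) (hAB : A < B)
    (y yd : ℝ → ℝ) (Λ : NNReal) (hy : LipschitzOnWith Λ y (Set.Icc 0 T))
    (hrep : ∀ a ∈ Set.Icc (0:ℝ) T, ∀ b ∈ Set.Icc (0:ℝ) T, y b - y a = ∫ s in a..b, yd s)
    (t : ℝ) (ht : t ∈ Set.Ico (0:ℝ) T)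
    (hcont : ∃ δ : ℝ, 0 < δ ∧ ContinuousOn yd
      ((Set.Ioo (-δ) δ ∪ Set.Ioo (t - δ) (t + δ)) ∩ Set.Icc (0:ℝ) T))
    (K : ℝ → ℝ) (hK0 : ∀ v, 0 ≤ K v) (hKbdd : ∃ C, ∀ v, K v ≤ C)
    (hsupp : Function.support K ⊆ Set.Icc A B) (hKint : ∫ v in A..B, K v = 1) :
    Tendsto (fun ε : ℝ =>
        ε ^ (-(1 / (2 - H))) *
          ((∫ s in (0:ℝ)..T,
              (∫ u in (0:ℝ)..t,
                (1 / ε ^ (1 / (2 - H))) * K ((s - u) / ε ^ (1 / (2 - H)))) * yd s)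
            - (y t - y 0)))
      (𝓝[>] (0:ℝ)) (𝓝 ((yd t - yd 0) * ∫ u in A..B, K u * u)) := by
  obtain ⟨δ, hδ, hctS⟩ := hcont
  have hB : 0 < B := lt_of_le_of_lt hA hAB
  have h2H : (0:ℝ) < 2 - H := by
    simp only [Set.mem_Ioo] at hH
    linarith [hH.2]
  have hα : 0 < 1/(2-H) := div_pos one_pos h2H
  have htend : Tendsto (fun ε : ℝ => ε ^ (1/(2-H))) (𝓝[>] (0:ℝ)) (𝓝[>] (0:ℝ)) := by
    rw [tendsto_nhdsWithin_iff]
    constructor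
    · have hc : ContinuousAt (fun x : ℝ => x ^ (1/(2-H))) 0 :=
        Real.continuousAt_rpow_const 0 _ (Or.inr hα.le)
      have h2 := hc.tendsto
      rw [Real.zero_rpow (ne_of_gt hα)] at h2
      exact h2.mono_left nhdsWithin_le_nhds
    · filter_upwards [self_mem_nhdsWithin] with ε hε
      exact Real.rpow_pos_of_pos hε _
  by_cases ht0 : t = 0
  · subst ht0
    have base : Tendsto (fun _ : ℝ => (0:ℝ)) (𝓝[>] (0:ℝ))
        (𝓝 ((yd 0 - yd 0) * ∫ u in A..B, K u * u)) := by
      rw [sub_self, zero_mul]; exact tendsto_const_nhds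
    refine base.congr fun ε => ?_
    symm
    simp [intervalIntegral.integral_same]
  replace ht0 : 0 < t := lt_of_le_of_ne ht.1 (Ne.symm ht0)
  have htT : t < T := ht.2
  set h0 : ℝ := min (min (t/B) ((T-t)/B)) (δ/(2*B)) with hh0def
  have hh0 : 0 < h0 :=
    lt_min (lt_min (div_pos ht0 hB) (div_pos (by linarith) hB)) (div_pos hδ (by positivity))
  have hh0B_t : h0 * B ≤ t := by
    have h1 : h0 ≤ t/B := le_trans (min_le_left _ _) (min_le_left _ _)
    calc h0 * B ≤ (t/B) * B := mul_le_mul_of_nonneg_right h1 hB.le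
      _ = t := div_mul_cancel₀ _ hB.ne'
  have hh0B_T : t + h0 * B ≤ T := by
    have h1 : h0 ≤ (T-t)/B := le_trans (min_le_left _ _) (min_le_right _ _)
    have h2 : h0 * B ≤ ((T-t)/B) * B := mul_le_mul_of_nonneg_right h1 hB.le
    rw [div_mul_cancel₀ _ hB.ne'] at h2
    linarith
  have hh0B_δ : h0 * B ≤ δ/2 := by
    have h1 : h0 ≤ δ/(2*B) := min_le_right _ _
    have h2 : h0 * B ≤ (δ/(2*B)) * B := mul_le_mul_of_nonneg_right h1 hB.le
    have h3 : (δ/(2*B)) * B = δ/2 := by field_simp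
    linarith
  have hh0Bpos : 0 < h0 * B := by positivity
  have hsub1 : Icc (0:ℝ) (h0*B) ⊆
      (Set.Ioo (-δ) δ ∪ Set.Ioo (t - δ) (t + δ)) ∩ Set.Icc (0:ℝ) T := by
    intro x hx
    exact ⟨Or.inl ⟨by linarith [hx.1], by linarith [hx.2]⟩,
      ⟨hx.1, by linarith [hx.2]⟩⟩
  have hsub2 : Icc t (t + h0*B) ⊆
      (Set.Ioo (-δ) δ ∪ Set.Ioo (t - δ) (t + δ)) ∩ Set.Icc (0:ℝ) T := by
    intro x hx
    exact ⟨Or.inr ⟨by linarith [hx.1], by linarith [hx.2]⟩,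
      ⟨by linarith [hx.1, ht.1], by linarith [hx.2]⟩⟩
  have hc0 : ContinuousOn yd (Icc 0 (h0*B)) := hctS.mono hsub1
  have hctt : ContinuousOn yd (Icc t (t + h0*B)) := hctS.mono hsub2
  have CA := claimA hA hAB hK0 hKbdd hsupp hKint ht.1 hh0 hc0 hctt
  have hIoc : Ioc (0:ℝ) h0 ∈ 𝓝[>] (0:ℝ) := Ioc_mem_nhdsGT_of_mem (left_mem_Ico.mpr hh0)
  have hrepT : y t - y 0 = ∫ s in (0:ℝ)..t, yd s :=
    hrep 0 ⟨le_rfl, hT.le⟩ t ⟨ht.1, htT.le⟩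
  by_cases hQ : IntervalIntegrable yd volume 0 t
  · have key : ∀ᶠ ε in 𝓝[>] (0:ℝ),
        ε ^ (-(1 / (2 - H))) *
          ((∫ s in (0:ℝ)..T,
              (∫ u in (0:ℝ)..t,
                (1 / ε ^ (1 / (2 - H))) * K ((s - u) / ε ^ (1 / (2 - H)))) * yd s)
            - (y t - y 0))
        = ∫ x in (0:ℝ)..B, (1 - ∫ v in A..x, K v) *
            (yd (t + (ε ^ (1/(2-H)))*x) - yd ((ε ^ (1/(2-H)))*x)) := by
      filter_upwards [self_mem_nhdsWithin, htend hIoc] with ε hε hεh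
      have hε' : (0:ℝ) < ε := hε
      set h : ℝ := ε ^ (1/(2-H)) with hhdef
      have hh : 0 < h := hεh.1
      have hhh0 : h ≤ h0 := hεh.2
      have hhB : h * B ≤ h0 * B := mul_le_mul_of_nonneg_right hhh0 hB.le
      have id := ident (T := T) hA hAB hsupp hKint ht.1 hctS hh
        (le_trans hhB hh0B_t) (show t + h * B ≤ T by linarith)
        (Subset.trans (Icc_subset_Icc le_rfl hhB) hsub1)
        (Subset.trans (Icc_subset_Icc le_rfl (by linarith)) hsub2)
        hQ
      rw [hrepT, id, Real.rpow_neg hε'.le, ← hhdef, inv_mul_cancel_left₀ hh.ne']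
    exact (CA.comp htend).congr' (key.mono fun ε hx => hx.symm)
  · -- pathological case: yd t = yd 0 = 0 and the expression is eventually 0
    have hconst : ∀ a ∈ Icc (0:ℝ) (h0*B), ∀ b ∈ Icc t (t + h0*B), y b = y a := by
      intro a ha b hb
      have hat : a ≤ t := le_trans ha.2 hh0B_t
      have hbT : b ≤ T := le_trans hb.2 hh0B_T
      have hni2 : ¬ IntervalIntegrable yd volume a b := by
        intro hI
        apply hQ
        have i1 : IntervalIntegrable yd volume 0 a := by
          apply ContinuousOn.intervalIntegrable
          rw [uIcc_of_le ha.1]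
          exact hc0.mono (Icc_subset_Icc le_rfl ha.2)
        have i2 : IntervalIntegrable yd volume a t := hI.mono_set (by
          rw [uIcc_of_le hat, uIcc_of_le (le_trans hat hb.1)]
          exact Icc_subset_Icc le_rfl hb.1)
        exact i1.trans i2
      have h1 := hrep a ⟨ha.1, le_trans hat htT.le⟩ b ⟨le_trans ht.1 hb.1, hbT⟩
      rw [intervalIntegral.integral_undef hni2] at h1
      linarith
    have h0mem : (0:ℝ) ∈ Icc (0:ℝ) (h0*B) := left_mem_Icc.mpr hh0Bpos.le
    have htmem : t ∈ Icc t (t + h0*B) := left_mem_Icc.mpr (by linarith)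
    have hydt0 : yd t = 0 := by
      apply deriv_zero hh0Bpos hctt
      intro s hs
      have h1 := hrep t ⟨ht.1, htT.le⟩ s ⟨le_trans ht.1 hs.1, le_trans hs.2 hh0B_T⟩
      have e1 : y s = y 0 := hconst 0 h0mem s hs
      have e2 : y t = y 0 := hconst 0 h0mem t htmem
      rw [← h1, e1, e2, sub_self]
    have hyd00 : yd 0 = 0 := by
      have hc0' : ContinuousOn yd (Icc 0 (0 + h0*B)) := by rwa [zero_add]
      apply deriv_zero hh0Bpos hc0'
      intro s hs
      rw [zero_add] at hs
      have h1 := hrep 0 ⟨le_rfl, hT.le⟩ s ⟨hs.1, by linarith [hs.2]⟩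
      have e1 : y t = y s := hconst s hs t htmem
      have e2 : y t = y 0 := hconst 0 h0mem t htmem
      rw [← h1]
      linarith
    have hzero : ∀ᶠ ε in 𝓝[>] (0:ℝ),
        ε ^ (-(1 / (2 - H))) *
          ((∫ s in (0:ℝ)..T,
              (∫ u in (0:ℝ)..t,
                (1 / ε ^ (1 / (2 - H))) * K ((s - u) / ε ^ (1 / (2 - H)))) * yd s)
            - (y t - y 0)) = 0 := by
      filter_upwards [self_mem_nhdsWithin, htend hIoc] with ε hε hεh
      set h : ℝ := ε ^ (1/(2-H)) with hhdef
      have hh : 0 < h := hεh.1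
      have hhB : h * B ≤ h0 * B := mul_le_mul_of_nonneg_right hεh.2 hB.le
      have hhBt : h * B ≤ t := le_trans hhB hh0B_t
      have hhB0 : 0 ≤ h * B := by positivity
      have e0 : (∫ s in (0:ℝ)..T, (∫ u in (0:ℝ)..t, (1/h) * K ((s-u)/h)) * yd s)
          = ∫ s in (0:ℝ)..T, (∫ v in (s - t)/h..(s/h), K v) * yd s := by
        apply intervalIntegral.integral_congr
        intro s _
        show (∫ u in (0:ℝ)..t, (1/h) * K ((s-u)/h)) * yd s
          = (∫ v in (s - t)/h..(s/h), K v) * yd s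
        rw [w_eq hh]
      have hni : ¬ IntervalIntegrable
          (fun s => (∫ v in (s - t)/h..(s/h), K v) * yd s) volume 0 T := by
        intro hI
        apply hQ
        have h1 : IntervalIntegrable
            (fun s => (∫ v in (s - t)/h..(s/h), K v) * yd s) volume (h*B) t :=
          hI.mono_set (by
            rw [uIcc_of_le hhBt, uIcc_of_le (le_trans ht0.le htT.le)]
            exact Icc_subset_Icc hhB0 htT.le)
        have h2 : IntegrableOn yd (Ioc (h*B) t) volume := by
          refine h1.1.congr_fun ?_ measurableSet_Ioc
          intro s' hs'
          show (∫ v in (s' - t)/h..(s'/h), K v) * yd s' = yd s'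
          rw [W_one hA hAB hsupp hKint hh hs'.1.le hs'.2, one_mul]
        have h4 : IntervalIntegrable yd volume (h*B) t :=
          intervalIntegrable_iff.mpr (by rwa [uIoc_of_le hhBt])
        have h5 : IntervalIntegrable yd volume 0 (h*B) := by
          apply ContinuousOn.intervalIntegrable
          rw [uIcc_of_le hhB0]
          exact hc0.mono (Icc_subset_Icc le_rfl hhB)
        exact h5.trans h4
      rw [hrepT, intervalIntegral.integral_undef hQ, e0,
        intervalIntegral.integral_undef hni]
      simp
    rw [hydt0, hyd00, sub_self, zero_mul]
    exact tendsto_const_nhds.congr' (hzero.mono fun ε hx => hx.symm)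
end
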